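/- arXiv:math/0512432 — 6 statements merged into one kernel-verified Lean document; each statement's English description precedes it below -/
import Mathlib

section
/- For α ∈ ℝ \ ℕ and ρ ∈ (0,∞), the n-th coefficient of (ρ - z)^α equals (-1)^n · binom(α, n) · ρ^(α-n), and this is asymptotically equivalent, as n → ∞, to (ρ^α / Γ(-α)) · ρ^{-n} · n^{-α-1}. -/
open Filter

noncomputable def bc (α : ℝ) (n : ℕ) : ℝ := (∏ i ∈ Finset.range n, (α - i)) / (Nat.factorial n)

lemma bc_succ (α : ℝ) (n : ℕ) : bc α (n+1) * (n+1) = (α - n) * bc α n := by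
  have h1 : ((Nat.factorial n : ℝ)) ≠ 0 := Nat.cast_ne_zero.mpr n.factorial_ne_zero
  have h2 : ((n : ℝ) + 1) ≠ 0 := by positivity
  simp only [bc, Finset.prod_range_succ, Nat.factorial_succ]
  push_cast
  field_simp

lemma tendsto_ratio (a c : ℝ) :
    Tendsto (fun n : ℕ => |a - n| / ((n : ℝ) + c)) atTop (nhds 1) := by
  have h1 : Tendsto (fun n : ℕ => (n : ℝ) + c) atTop atTop :=
    tendsto_atTop_add_const_right atTop c tendsto_natCast_atTop_atTop
  have h2 : Tendsto (fun n : ℕ => 1 - (a + c) / ((n : ℝ) + c)) atTop (nhds 1) := by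
    have h3 : Tendsto (fun n : ℕ => (a + c) * ((n : ℝ) + c)⁻¹) atTop (nhds ((a+c) * 0)) :=
      tendsto_const_nhds.mul h1.inv_tendsto_atTop
    have := tendsto_const_nhds.sub h3 (f := fun _ : ℕ => (1:ℝ))
    simpa [div_eq_mul_inv] using this
  apply h2.congr'
  have hev1 : ∀ᶠ n : ℕ in atTop, a ≤ (n : ℝ) := tendsto_natCast_atTop_atTop.eventually_ge_atTop a
  have hev2 : ∀ᶠ n : ℕ in atTop, 0 < (n : ℝ) + c := h1.eventually_gt_atTop 0
  filter_upwards [hev1, hev2] with n hn hn'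
  rw [abs_of_nonpos (by linarith)]
  field_simp
  ring

lemma summable_main (α x : ℝ) (hx : |x| < 1) : Summable (fun n : ℕ => bc α n * x ^ n) := by
  set k := (1 + |x|) / 2 with hk
  have hxk : |x| < k := by rw [hk]; linarith
  have hk1 : k < 1 := by rw [hk]; linarith
  apply summable_of_ratio_norm_eventually_le hk1
  have hev : ∀ᶠ n : ℕ in atTop, |α - n| / ((n : ℝ) + 1) * |x| ≤ k := by
    have ht : Tendsto (fun n : ℕ => |α - n| / ((n : ℝ) + 1) * |x|) atTop (nhds (1 * |x|)) :=
      (tendsto_ratio α 1).mul tendsto_const_nhds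
    rw [one_mul] at ht
    exact ht.eventually_le_const hxk
  filter_upwards [hev] with n hn
  have h2 : ((n : ℝ) + 1) ≠ 0 := by positivity
  have heq : bc α (n+1) = (α - n) / ((n : ℝ) + 1) * bc α n := by
    have := bc_succ α n
    field_simp at this ⊢
    linarith [this]
  calc ‖bc α (n+1) * x ^ (n+1)‖ = |α - n| / ((n:ℝ)+1) * |x| * ‖bc α n * x ^ n‖ := by
        rw [heq]
        simp only [norm_mul, Real.norm_eq_abs, pow_succ, abs_mul, abs_div]
        rw [abs_of_pos (by positivity : (0:ℝ) < (n:ℝ)+1)]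
        ring
    _ ≤ k * ‖bc α n * x ^ n‖ := by
        apply mul_le_mul_of_nonneg_right hn (norm_nonneg _)

lemma summable_u (α r : ℝ) (hr0 : 0 < r) (hr1 : r < 1) :
    Summable (fun n : ℕ => |bc α n| * n * r ^ (n - 1)) := by
  set k := (1 + r) / 2 with hk
  have hrk : r < k := by rw [hk]; linarith
  have hk1 : k < 1 := by rw [hk]; linarith
  apply summable_of_ratio_norm_eventually_le hk1
  have hev : ∀ᶠ n : ℕ in atTop, |α - n| / ((n : ℝ) + 0) * r ≤ k := by
    have ht : Tendsto (fun n : ℕ => |α - n| / ((n : ℝ) + 0) * r) atTop (nhds (1 * r)) :=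
      (tendsto_ratio α 0).mul tendsto_const_nhds
    rw [one_mul] at ht
    exact ht.eventually_le_const hrk
  filter_upwards [hev, eventually_ge_atTop 1] with n hn hn1
  have h2 : ((n : ℝ) + 1) ≠ 0 := by positivity
  have hn0 : (0:ℝ) < (n : ℝ) := by exact_mod_cast hn1
  have heq : bc α (n+1) = (α - n) / ((n : ℝ) + 1) * bc α n := by
    have := bc_succ α n
    field_simp at this ⊢
    linarith [this]
  have hpow : r ^ (n + 1 - 1) = r ^ (n - 1) * r := by
    obtain ⟨m, rfl⟩ := Nat.exists_eq_add_of_le hn1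
    rw [Nat.add_comm 1 m]
    simp [pow_succ]
  calc ‖|bc α (n+1)| * (n+1 : ℕ) * r ^ (n+1-1)‖
      = (|α - n| / ((n:ℝ)+0) * r) * ‖|bc α n| * n * r ^ (n-1)‖ := by
        rw [heq, hpow]
        simp only [Real.norm_eq_abs, abs_mul, abs_abs, abs_div, abs_of_pos hr0,
          abs_of_pos (by positivity : (0:ℝ) < (n:ℝ)+1), add_zero,
          abs_of_pos (show (0:ℝ) < ((n:ℝ)) from hn0),
          abs_of_nonneg (pow_nonneg hr0.le (n-1))]
        push_cast
        rw [abs_of_pos (show (0:ℝ) < (n:ℝ) + 1 by positivity)]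
        field_simp
    _ ≤ k * ‖|bc α n| * n * r ^ (n-1)‖ := mul_le_mul_of_nonneg_right hn (norm_nonneg _)

noncomputable def fb (α : ℝ) : ℝ → ℝ := fun x => ∑' n : ℕ, bc α n * x ^ n

lemma summable_D (α x r : ℝ) (hxr : |x| ≤ r) (hr0 : 0 < r) (hr1 : r < 1) :
    Summable (fun n : ℕ => bc α n * ((n : ℝ) * x ^ (n - 1))) := by
  apply Summable.of_norm_bounded (summable_u α r hr0 hr1)
  intro n
  simp only [Real.norm_eq_abs, abs_mul, Nat.abs_cast]
  rw [mul_assoc]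
  gcongr
  rw [abs_pow]
  exact pow_le_pow_left₀ (abs_nonneg x) hxr _

lemma hasDerivAt_fb (α x : ℝ) (hx : |x| < 1) :
    HasDerivAt (fb α) (∑' n : ℕ, bc α n * ((n : ℝ) * x ^ (n - 1))) x := by
  set r := (1 + |x|) / 2 with hr
  have hxr : |x| < r := by rw [hr]; linarith
  have hr0 : 0 < r := by positivity
  have hr1 : r < 1 := by rw [hr]; linarith
  have : HasDerivAt (fun y => ∑' n : ℕ, bc α n * y ^ n)
      (∑' n : ℕ, bc α n * ((n : ℝ) * x ^ (n - 1))) x := by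
    apply hasDerivAt_tsum_of_isPreconnected (u := fun n : ℕ => |bc α n| * n * r ^ (n - 1))
        (g := fun (n : ℕ) (y : ℝ) => bc α n * y ^ n)
        (g' := fun (n : ℕ) (y : ℝ) => bc α n * ((n : ℝ) * y ^ (n - 1)))
        (summable_u α r hr0 hr1) Metric.isOpen_ball
        ((convex_ball (0:ℝ) r).isPreconnected)
        (y₀ := 0)
    · intro n y _
      exact (hasDerivAt_pow n y).const_mul (bc α n)
    · intro n y hy
      rw [Metric.mem_ball, dist_zero_right, Real.norm_eq_abs] at hy
      simp only [Real.norm_eq_abs, abs_mul, Nat.abs_cast]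
      rw [mul_assoc]
      gcongr
      rw [abs_pow]
      exact pow_le_pow_left₀ (abs_nonneg y) hy.le _
    · rw [Metric.mem_ball, dist_zero_right, Real.norm_eq_abs]
      simpa using hr0
    · apply summable_of_ne_finset_zero (s := {0})
      intro n hn
      simp [zero_pow (by simpa using hn : n ≠ 0)]
    · rw [Metric.mem_ball, dist_zero_right, Real.norm_eq_abs]
      exact hxr
  exact this

lemma feq (α x : ℝ) (hx : |x| < 1) :
    (1 + x) * (∑' n : ℕ, bc α n * ((n : ℝ) * x ^ (n - 1))) = α * fb α x := by
  set r := (1 + |x|) / 2 with hr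
  have hxr : |x| ≤ r := by rw [hr]; linarith
  have hr0 : 0 < r := by positivity
  have hr1 : r < 1 := by rw [hr]; linarith
  have hsD := summable_D α x r hxr hr0 hr1
  have hshift : Summable (fun n : ℕ => bc α (n+1) * (((n:ℕ)+1 : ℝ) * x ^ n)) := by
    have := (summable_nat_add_iff 1).2 hsD
    apply this.congr
    intro n
    push_cast
    simp
  have hA : Summable (fun n : ℕ => (α - n) * (bc α n * x ^ n)) := by
    apply hshift.congr
    intro n
    have := bc_succ α n
    push_cast
    linear_combination x ^ n * this
  have hB : Summable (fun n : ℕ => (n : ℝ) * (bc α n * x ^ n)) := by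
    apply Summable.of_norm_bounded ((summable_u α r hr0 hr1).mul_right r)
    intro n
    cases n with
    | zero => simp
    | succ m =>
      simp only [Real.norm_eq_abs, abs_mul, Nat.abs_cast, abs_pow]
      have : |x| ^ (m+1) ≤ r ^ (m+1-1) * r := by
        rw [show r ^ (m+1-1) * r = r ^ (m+1) by rw [Nat.add_sub_cancel, pow_succ]]
        exact pow_le_pow_left₀ (abs_nonneg x) hxr _
      calc (↑(m+1) : ℝ) * (|bc α (m+1)| * |x| ^ (m+1))
          ≤ (↑(m+1) : ℝ) * (|bc α (m+1)| * (r ^ (m+1-1) * r)) := by gcongr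
        _ = |bc α (m+1)| * (↑(m+1) : ℝ) * r ^ (m+1-1) * r := by ring
  have hDeq : (∑' n : ℕ, bc α n * ((n : ℝ) * x ^ (n - 1)))
      = ∑' n : ℕ, (α - n) * (bc α n * x ^ n) := by
    rw [Summable.tsum_eq_zero_add hsD]
    norm_num
    apply tsum_congr
    intro n
    have := bc_succ α n
    linear_combination x ^ n * this
  have hxD : x * (∑' n : ℕ, bc α n * ((n : ℝ) * x ^ (n - 1)))
      = ∑' n : ℕ, (n : ℝ) * (bc α n * x ^ n) := by
    rw [← tsum_mul_left]
    apply tsum_congr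
    intro n
    cases n with
    | zero => simp
    | succ m => rw [Nat.add_sub_cancel]; push_cast; ring
  have expand : (1 + x) * (∑' n : ℕ, bc α n * ((n : ℝ) * x ^ (n - 1)))
      = (∑' n : ℕ, (α - n) * (bc α n * x ^ n)) + ∑' n : ℕ, (n : ℝ) * (bc α n * x ^ n) := by
    rw [add_mul, one_mul, hxD, hDeq]
  rw [expand, ← Summable.tsum_add hA hB]
  unfold fb
  rw [← tsum_mul_left]
  apply tsum_congr
  intro n
  ring

lemma fb_zero (α : ℝ) : fb α 0 = 1 := by
  unfold fb
  rw [tsum_eq_single 0 (fun n hn => by simp [zero_pow hn])]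
  simp [bc]

lemma fb_eq (α x : ℝ) (hx : |x| < 1) : fb α x = (1 + x) ^ α := by
  set h : ℝ → ℝ := fun y => fb α y * (1 + y) ^ (-α) with hh
  have key : ∀ y : ℝ, |y| < 1 → HasDerivAt h 0 y := by
    intro y hy
    obtain ⟨hy1, hy2⟩ := abs_lt.mp hy
    have h1y : 0 < 1 + y := by linarith
    have hf := hasDerivAt_fb α y hy
    have hg : HasDerivAt (fun y : ℝ => (1 + y) ^ (-α)) (-α * (1 + y) ^ (-α - 1)) y := by
      have h1 := Real.hasDerivAt_rpow_const (x := 1 + y) (p := -α) (Or.inl h1y.ne')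
      have hid : HasDerivAt (fun y : ℝ => 1 + y) 1 y := (hasDerivAt_id y).const_add 1
      exact (h1.comp y hid).congr_deriv (by ring)
    have hmul := hf.mul hg
    have hval : (∑' n : ℕ, bc α n * ((n : ℝ) * y ^ (n - 1))) * (1 + y) ^ (-α)
        + fb α y * (-α * (1 + y) ^ (-α - 1)) = 0 := by
      have hsplit : (1 + y) ^ (-α) = (1 + y) ^ (-α - 1) * (1 + y) := by
        rw [← Real.rpow_add_one h1y.ne' (-α - 1)]
        ring_nf
      rw [hsplit]
      have := feq α y hy
      linear_combination (1 + y) ^ (-α - 1) * this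
    rw [hval] at hmul
    exact hmul
  have h0 : h 0 = 1 := by
    rw [hh]
    simp [fb_zero]
  have hx1 : h x = 1 := by
    rcases le_or_gt 0 x with hx0 | hx0
    · have := constant_of_has_deriv_right_zero (f := h) (a := 0) (b := x)
        (fun y hy => by
          have : |y| < 1 := by
            rw [Set.mem_Icc] at hy
            rw [abs_lt]; constructor <;> [linarith; nlinarith [abs_lt.mp hx]]
          exact (key y this).continuousAt.continuousWithinAt)
        (fun y hy => by
          have : |y| < 1 := by
            rw [Set.mem_Ico] at hy
            rw [abs_lt]; constructor <;> [linarith; nlinarith [abs_lt.mp hx]]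
          exact (key y this).hasDerivWithinAt)
        x (Set.right_mem_Icc.mpr hx0)
      rw [this, h0]
    · have := constant_of_has_deriv_right_zero (f := h) (a := x) (b := 0)
        (fun y hy => by
          have : |y| < 1 := by
            rw [Set.mem_Icc] at hy
            rw [abs_lt]; constructor <;> [nlinarith [abs_lt.mp hx]; linarith]
          exact (key y this).continuousAt.continuousWithinAt)
        (fun y hy => by
          have : |y| < 1 := by
            rw [Set.mem_Ico] at hy
            rw [abs_lt]; constructor <;> [nlinarith [abs_lt.mp hx]; linarith]
          exact (key y this).hasDerivWithinAt)
        0 (Set.right_mem_Icc.mpr hx0.le)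
      rw [← h0, this]
  have h1x : 0 < 1 + x := by nlinarith [abs_lt.mp hx]
  have hne : (1 + x) ^ α ≠ 0 := (Real.rpow_pos_of_pos h1x α).ne'
  rw [hh] at hx1
  simp only at hx1
  rw [Real.rpow_neg h1x.le] at hx1
  exact (mul_inv_eq_one₀ hne).mp hx1



/-- binomial coefficient asymptotics for `(ρ - z)^α`. -/
theorem stmt_1 (α : ℝ) (hα : ∀ n : ℕ, α ≠ (n : ℝ)) (ρ : ℝ) (hρ : 0 < ρ)
    (c : ℕ → ℝ)
    (hc : ∀ n, c n = (-1) ^ n *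
        ((∏ i ∈ Finset.range n, (α - (i : ℝ))) / (Nat.factorial n)) * ρ ^ (α - (n : ℝ))) :
    (∀ z : ℝ, |z| < ρ → (ρ - z) ^ α = ∑' n, c n * z ^ n) ∧
      Tendsto (fun n : ℕ =>
          c n / ((ρ ^ α / Real.Gamma (-α)) * ρ ^ (-(n : ℝ)) * (n : ℝ) ^ (-α - 1)))
        atTop (nhds 1) := by
  have hc' : ∀ n, c n = (-1 : ℝ) ^ n * bc α n * ρ ^ (α - (n : ℝ)) := fun n => hc n
  constructor
  · intro z hz
    set x := -z / ρ with hxdef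
    have hρ' : ρ ≠ 0 := hρ.ne'
    have hx : |x| < 1 := by
      rw [hxdef, abs_div, abs_neg, abs_of_pos hρ, div_lt_one hρ]
      exact hz
    have h1 : ρ - z = ρ * (1 + x) := by
      rw [hxdef]; field_simp; ring
    have h1x : 0 ≤ 1 + x := by nlinarith [abs_lt.mp hx]
    rw [h1, Real.mul_rpow hρ.le h1x, ← fb_eq α x hx]
    unfold fb
    rw [← tsum_mul_left]
    apply tsum_congr
    intro n
    rw [hc', Real.rpow_sub hρ, Real.rpow_natCast, hxdef]
    rw [div_pow, neg_pow z n]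
    field_simp
  · set s := -α with hs
    have hsm : ∀ m : ℕ, s + m ≠ 0 := by
      intro m hm
      exact hα m (by linarith [hm] : α = m)
    have hΓ : Real.Gamma s ≠ 0 := by
      apply Real.Gamma_ne_zero
      intro m hm
      exact hα m (by linarith [hm])
    have key : ∀ n : ℕ, 1 ≤ n →
        c n / ((ρ ^ α / Real.Gamma (-α)) * ρ ^ (-(n : ℝ)) * (n : ℝ) ^ (-α - 1))
          = Real.Gamma s / Real.GammaSeq s n * ((n : ℝ) / (s + n)) := by
      intro n hn
      have hn0 : (0 : ℝ) < (n : ℝ) := by exact_mod_cast hn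
      have hP : (∏ i ∈ Finset.range n, (α - (i : ℝ))) =
          (-1 : ℝ) ^ n * ∏ j ∈ Finset.range n, (s + j) := by
        calc ∏ i ∈ Finset.range n, (α - (i : ℝ))
            = ∏ i ∈ Finset.range n, ((-1) * (s + i)) :=
              Finset.prod_congr rfl (fun i _ => by rw [hs]; ring)
          _ = (-1 : ℝ) ^ n * ∏ j ∈ Finset.range n, (s + j) := by
              rw [Finset.prod_mul_distrib, Finset.prod_const, Finset.card_range]
      have hPne : (∏ j ∈ Finset.range n, (s + j)) ≠ 0 :=
        Finset.prod_ne_zero_iff.mpr (fun j _ => hsm j)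
      have hfac : ((Nat.factorial n : ℝ)) ≠ 0 := Nat.cast_ne_zero.mpr n.factorial_ne_zero
      have hGdef : Real.GammaSeq s n =
          (n : ℝ) ^ s * (Nat.factorial n) / ((∏ j ∈ Finset.range n, (s + j)) * (s + n)) := by
        rw [Real.GammaSeq, Finset.prod_range_succ]
      have hGne : Real.GammaSeq s n ≠ 0 := by
        rw [hGdef]
        apply div_ne_zero
        · exact mul_ne_zero (Real.rpow_pos_of_pos hn0 s).ne' hfac
        · exact mul_ne_zero hPne (hsm n)
      have hGP : Real.GammaSeq s n * ((∏ j ∈ Finset.range n, (s + j)) * (s + n)) =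
          (n : ℝ) ^ s * (Nat.factorial n) := by
        rw [hGdef]
        exact div_mul_cancel₀ _ (mul_ne_zero hPne (hsm n))
      have e1 : c n = (∏ j ∈ Finset.range n, (s + j)) / (Nat.factorial n) * ρ ^ (α - (n : ℝ)) := by
        rw [hc n, hP]
        have hone : ((-1 : ℝ)) ^ n * (-1) ^ n = 1 := by
          rw [← pow_add]; exact Even.neg_one_pow (Even.add_self n)
        linear_combination ((∏ j ∈ Finset.range n, (s + j)) / (Nat.factorial n)
          * ρ ^ (α - (n : ℝ))) * hone
      have e2 : (∏ j ∈ Finset.range n, (s + j)) =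
          (n : ℝ) ^ s * (Nat.factorial n) / (Real.GammaSeq s n * (s + n)) := by
        rw [eq_div_iff (mul_ne_zero hGne (hsm n))]
        linear_combination hGP
      have hcn : c n = (n : ℝ) ^ s * ρ ^ (α - (n : ℝ)) / (Real.GammaSeq s n * (s + n)) := by
        rw [e1, e2]
        have hGT : Real.GammaSeq s n * (s + (n : ℝ)) ≠ 0 := mul_ne_zero hGne (hsm n)
        generalize hT : Real.GammaSeq s n * (s + (n : ℝ)) = T at hGT ⊢
        field_simp
      rw [hcn]
      have hz1 : ρ ^ (α - (n : ℝ)) = ρ ^ α * ρ ^ (-(n : ℝ)) := by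
        rw [← Real.rpow_add hρ]; ring_nf
      have hz2 : (n : ℝ) ^ (-α - 1) = (n : ℝ) ^ s * ((n : ℝ))⁻¹ := by
        rw [show -α - 1 = s + (-1) by rw [hs]; ring, Real.rpow_add hn0, Real.rpow_neg_one]
      rw [hz1, hz2, ← hs]
      have n1 : (n : ℝ) ^ s ≠ 0 := (Real.rpow_pos_of_pos hn0 s).ne'
      have n2 : ρ ^ α ≠ 0 := (Real.rpow_pos_of_pos hρ α).ne'
      have n3 : ρ ^ (-(n : ℝ)) ≠ 0 := (Real.rpow_pos_of_pos hρ _).ne'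
      have hsn := hsm n
      generalize hT : s + (n : ℝ) = T at hsn hGne ⊢
      generalize hG : Real.GammaSeq s n = G at hGne ⊢
      have hnne : (n : ℝ) ≠ 0 := hn0.ne'
      field_simp
    have t1 : Tendsto (fun n : ℕ => Real.Gamma s / Real.GammaSeq s n) atTop
        (nhds (Real.Gamma s / Real.Gamma s)) :=
      tendsto_const_nhds.div (Real.GammaSeq_tendsto_Gamma s) hΓ
    rw [div_self hΓ] at t1
    have t2 : Tendsto (fun n : ℕ => (n : ℝ) / (s + n)) atTop (nhds 1) := by
      have hat : Tendsto (fun n : ℕ => s + (n : ℝ)) atTop atTop :=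
        tendsto_atTop_add_const_left atTop s tendsto_natCast_atTop_atTop
      have h3 : Tendsto (fun n : ℕ => 1 - s * (s + (n : ℝ))⁻¹) atTop (nhds (1 - s * 0)) :=
        tendsto_const_nhds.sub (tendsto_const_nhds.mul hat.inv_tendsto_atTop)
      simp only [mul_zero, sub_zero] at h3
      apply h3.congr
      intro n
      have := hsm n
      field_simp
      ring
    have := t1.mul t2
    rw [one_mul] at this
    apply this.congr'
    filter_upwards [eventually_ge_atTop 1] with n hn
    exact (key n hn).symm
end

section
/- Let T be a power series with nonnegative coefficients, zero constant term, radius of convergence ρ ∈ (0,∞), and shift periodic form T(z) = z^d V(z^q) with ω := e^{2πi/q}. Then T(ωz) = ω^d T(z) for all |z| < ρ, and consequently every point z₀ with z₀^q = ρ^q is a singularity of T (i.e., T has no analytic continuation to any neighborhood of z₀). -/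
open Complex Metric
open scoped ENNReal NNReal

namespace Stmt3Aux

/-- scalar formal multilinear series with given coefficients -/
noncomputable def ps (c : ℕ → ℂ) : FormalMultilinearSeries ℂ ℂ ℂ :=
  fun n => ContinuousMultilinearMap.mkPiRing ℂ (Fin n) (c n)

lemma ps_apply (c : ℕ → ℂ) (n : ℕ) (y : ℂ) : (ps c n) (fun _ => y) = c n * y ^ n := by
  simp [ps, ContinuousMultilinearMap.mkPiRing_apply, smul_eq_mul, mul_comm]

lemma ps_norm (c : ℕ → ℂ) (n : ℕ) : ‖ps c n‖ = ‖c n‖ := by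
  simp [ps, ContinuousMultilinearMap.norm_mkPiRing]

lemma summable_of_ofReal {f : ℕ × ℕ → ℝ} (h0 : ∀ i, 0 ≤ f i)
    (h : ∑' i, ENNReal.ofReal (f i) ≠ ⊤) : Summable f :=
  (ENNReal.summable_toReal h).congr fun i => ENNReal.toReal_ofReal (h0 i)

lemma summable_of_ofReal' {f : ℕ → ℝ} (h0 : ∀ i, 0 ≤ f i)
    (h : ∑' i, ENNReal.ofReal (f i) ≠ ⊤) : Summable f :=
  (ENNReal.summable_toReal h).congr fun i => ENNReal.toReal_ofReal (h0 i)

lemma psi_inj : Function.Injective (fun p : ℕ × ℕ => (p.1, p.2 + p.1)) := by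
  intro a b h
  simp only [Prod.mk.injEq] at h
  obtain ⟨h1, h2⟩ := h
  exact Prod.ext h1 (by omega)

/-- grouping the double sum by diagonals, in `ℝ≥0∞`. -/
lemma master (t : ℕ → ℝ) (hnn : ∀ n, 0 ≤ t n) (x s : ℝ) (hx : 0 ≤ x) (hs : 0 ≤ s) :
    ∑' p : ℕ × ℕ,
        ENNReal.ofReal (((p.2 + p.1).choose p.1 : ℝ) * t (p.2 + p.1) * x ^ p.2 * s ^ p.1)
      = ∑' m, ENNReal.ofReal (t m * (x + s) ^ m) := by
  set g : ℕ × ℕ → ℝ≥0∞ := fun q =>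
    ENNReal.ofReal (if q.1 ≤ q.2 then ((q.2).choose q.1 : ℝ) * t q.2 * x ^ (q.2 - q.1) * s ^ q.1
      else 0) with hg
  have h1 : ∑' p : ℕ × ℕ,
      ENNReal.ofReal (((p.2 + p.1).choose p.1 : ℝ) * t (p.2 + p.1) * x ^ p.2 * s ^ p.1)
      = ∑' q, g q := by
    rw [← Function.Injective.tsum_eq psi_inj (f := g)]
    · apply tsum_congr
      rintro ⟨k, n⟩
      simp [hg, Nat.add_sub_cancel]
    · rintro ⟨k, m⟩ hq
      by_contra hr
      apply hq
      rcases le_or_gt k m with h | h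
      · exact absurd ⟨(k, m - k), by simp; omega⟩ hr
      · simp [hg, Nat.not_le.2 h]
  rw [h1, ENNReal.tsum_prod', ENNReal.tsum_comm]
  apply tsum_congr
  intro m
  have h2 : ∑' k, g (k, m) = ∑ k ∈ Finset.range (m + 1), g (k, m) := by
    apply tsum_eq_sum
    intro k hk
    simp only [Finset.mem_range, Nat.lt_add_one_iff, not_le] at hk
    simp [hg, Nat.not_le.2 hk]
  rw [h2]
  have h3 : ∀ k ∈ Finset.range (m + 1),
      g (k, m) = ENNReal.ofReal (t m * (s ^ k * x ^ (m - k) * ((m).choose k : ℝ))) := by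
    intro k hk
    simp only [Finset.mem_range, Nat.lt_add_one_iff] at hk
    rw [hg]
    simp only [if_pos hk]
    congr 1
    ring
  rw [Finset.sum_congr rfl h3, ← ENNReal.ofReal_sum_of_nonneg, ← Finset.mul_sum, add_comm x s,
    add_pow]
  intro k hk
  have := hnn m
  positivity


/-- summability of the recentered double family, given `x + s < ρ`. -/
lemma dsum (t : ℕ → ℝ) (hnn : ∀ n, 0 ≤ t n) (ρ : ℝ)
    (hconv : ∀ r : ℝ, 0 ≤ r → r < ρ → Summable fun n => t n * r ^ n)
    (x : ℝ) (hx : 0 ≤ x) (s : ℝ) (hs : 0 ≤ s) (hxs : x + s < ρ) :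
    Summable fun p : ℕ × ℕ =>
      ((p.2 + p.1).choose p.1 : ℝ) * t (p.2 + p.1) * x ^ p.2 * s ^ p.1 := by
  have h0 : ∀ p : ℕ × ℕ,
      0 ≤ ((p.2 + p.1).choose p.1 : ℝ) * t (p.2 + p.1) * x ^ p.2 * s ^ p.1 := by
    intro p; have := hnn (p.2 + p.1); positivity
  apply summable_of_ofReal h0
  rw [master t hnn x s hx hs, ← ENNReal.ofReal_tsum_of_nonneg
    (fun m => by have h1 := hnn m; positivity) (hconv _ (by linarith) hxs)]
  exact ENNReal.ofReal_ne_top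

/-- summability of each column sum. -/
lemma csum (t : ℕ → ℝ) (hnn : ∀ n, 0 ≤ t n) (ρ : ℝ)
    (hconv : ∀ r : ℝ, 0 ≤ r → r < ρ → Summable fun n => t n * r ^ n)
    (x : ℝ) (hx : 0 ≤ x) (hxρ : x < ρ) (k : ℕ) :
    Summable fun n => ((n + k).choose k : ℝ) * t (n + k) * x ^ n := by
  set s : ℝ := (ρ - x) / 2 with hs
  have hs0 : 0 < s := by simp only [hs]; linarith
  have h := (dsum t hnn ρ hconv x hx s hs0.le (by simp only [hs]; linarith)).prod_factor k
  have h2 := h.mul_right (s ^ k)⁻¹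
  apply h2.congr
  intro n
  have : (s : ℝ) ^ k ≠ 0 := by positivity
  field_simp

/-- summability of the row sums. -/
lemma rsum (t : ℕ → ℝ) (hnn : ∀ n, 0 ≤ t n) (ρ : ℝ)
    (hconv : ∀ r : ℝ, 0 ≤ r → r < ρ → Summable fun n => t n * r ^ n)
    (x : ℝ) (hx : 0 ≤ x) (s : ℝ) (hs : 0 ≤ s) (hxs : x + s < ρ) :
    Summable fun k => (∑' n, ((n + k).choose k : ℝ) * t (n + k) * x ^ n) * s ^ k := by
  have h0 : ∀ p : ℕ × ℕ,
      0 ≤ ((p.2 + p.1).choose p.1 : ℝ) * t (p.2 + p.1) * x ^ p.2 * s ^ p.1 := by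
    intro p; have := hnn (p.2 + p.1); positivity
  have h := ((summable_prod_of_nonneg h0).1 (dsum t hnn ρ hconv x hx s hs hxs)).2
  apply h.congr
  intro k
  dsimp only
  rw [tsum_mul_right]

/-- the final transfer: if the recentered series is summable at `s`, the original
series is summable at `x + s`. -/
lemma final (t : ℕ → ℝ) (hnn : ∀ n, 0 ≤ t n) (ρ : ℝ)
    (hconv : ∀ r : ℝ, 0 ≤ r → r < ρ → Summable fun n => t n * r ^ n)
    (x : ℝ) (hx : 0 ≤ x) (hxρ : x < ρ) (s : ℝ) (hs : 0 ≤ s)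
    (h : Summable fun k => (∑' n, ((n + k).choose k : ℝ) * t (n + k) * x ^ n) * s ^ k) :
    Summable fun m => t m * (x + s) ^ m := by
  apply summable_of_ofReal' (fun m => by have := hnn m; positivity)
  rw [← master t hnn x s hx hs, ENNReal.tsum_prod']
  have h1 : ∀ k, ∑' n,
      ENNReal.ofReal (((n + k).choose k : ℝ) * t (n + k) * x ^ n * s ^ k)
      = ENNReal.ofReal ((∑' n, ((n + k).choose k : ℝ) * t (n + k) * x ^ n) * s ^ k) := by
    intro k
    rw [← tsum_mul_right, ← ENNReal.ofReal_tsum_of_nonneg]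
    · intro n; have := hnn (n + k); positivity
    · exact (csum t hnn ρ hconv x hx hxρ k).mul_right _
  calc ∑' (k : ℕ) (n : ℕ),
        ENNReal.ofReal (((n + k).choose k : ℝ) * t (n + k) * x ^ n * s ^ k)
      = ∑' k, ENNReal.ofReal
          ((∑' n, ((n + k).choose k : ℝ) * t (n + k) * x ^ n) * s ^ k) := by
        exact tsum_congr h1
    _ ≠ ⊤ := by
        rw [← ENNReal.ofReal_tsum_of_nonneg]
        · exact ENNReal.ofReal_ne_top
        · intro k
          have h2 : 0 ≤ ∑' n, ((n + k).choose k : ℝ) * t (n + k) * x ^ n :=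
            tsum_nonneg fun n => by have := hnn (n + k); positivity
          positivity
        · exact h


/-- the power series of `T` at `0` on the ball of radius `ρ`. -/
lemma hasF (t : ℕ → ℝ) (hnn : ∀ n, 0 ≤ t n) (ρ : ℝ) (hρ : 0 < ρ)
    (hconv : ∀ r : ℝ, 0 ≤ r → r < ρ → Summable fun n => t n * r ^ n) :
    HasFPowerSeriesOnBall (fun z : ℂ => ∑' n, (t n : ℂ) * z ^ n)
      (ps fun n => (t n : ℂ)) 0 (ENNReal.ofReal ρ) := by
  have hsum : ∀ z : ℂ, ‖z‖ < ρ → Summable fun n => (t n : ℂ) * z ^ n := by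
    intro z hz
    apply Summable.of_norm
    have h5 : (fun n => ‖(t n : ℂ) * z ^ n‖) = fun n => t n * ‖z‖ ^ n := by
      funext n
      rw [norm_mul, norm_pow, Complex.norm_real, Real.norm_eq_abs,
        _root_.abs_of_nonneg (hnn n)]
    rw [h5]
    exact hconv _ (norm_nonneg z) hz
  constructor
  · apply ENNReal.le_of_forall_nnreal_lt
    intro r hr
    have hr' : (r : ℝ) < ρ := by
      rw [← ENNReal.ofReal_coe_nnreal] at hr
      exact (ENNReal.ofReal_lt_ofReal_iff hρ).1 hr
    apply FormalMultilinearSeries.le_radius_of_summable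
    have := hconv r r.2 hr'
    apply this.congr
    intro n
    rw [ps_norm, Complex.norm_real, Real.norm_eq_abs, _root_.abs_of_nonneg (hnn n)]
  · exact ENNReal.ofReal_pos.2 hρ
  · intro y hy
    rw [mem_emetric_ball_zero_iff, ← ofReal_norm,
      ENNReal.ofReal_lt_ofReal_iff hρ] at hy
    have h1 : (fun n => (ps fun n => (t n : ℂ)) n fun _ => y) = fun n => (t n : ℂ) * y ^ n :=
      funext fun n => ps_apply _ n y
    rw [h1, zero_add]
    exact (hsum y hy).hasSum

/-- the complex rearrangement: the recentered series converges to `T (x + y)`. -/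
lemma cfub (t : ℕ → ℝ) (hnn : ∀ n, 0 ≤ t n) (ρ : ℝ)
    (hconv : ∀ r : ℝ, 0 ≤ r → r < ρ → Summable fun n => t n * r ^ n)
    (x : ℝ) (hx : 0 ≤ x) (y : ℂ) (hy : x + ‖y‖ < ρ) :
    HasSum (fun k => ((∑' n, ((n + k).choose k : ℝ) * t (n + k) * x ^ n : ℝ) : ℂ) * y ^ k)
      (∑' m, (t m : ℂ) * ((x : ℂ) + y) ^ m) := by
  have hxρ : x < ρ := lt_of_le_of_lt (le_add_of_nonneg_right (norm_nonneg y)) hy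
  set a : ℕ × ℕ → ℂ := fun p =>
    ((((p.2 + p.1).choose p.1 : ℝ) * t (p.2 + p.1) * x ^ p.2 : ℝ) : ℂ) * y ^ p.1 with ha
  have hnorm : ∀ p : ℕ × ℕ, ‖a p‖ =
      ((p.2 + p.1).choose p.1 : ℝ) * t (p.2 + p.1) * x ^ p.2 * ‖y‖ ^ p.1 := by
    intro p
    have h1 : (0:ℝ) ≤ ((p.2 + p.1).choose p.1 : ℝ) * t (p.2 + p.1) * x ^ p.2 := by
      have := hnn (p.2 + p.1); positivity
    rw [ha]
    dsimp only
    rw [norm_mul, norm_pow, Complex.norm_real, Real.norm_eq_abs, _root_.abs_of_nonneg h1]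
  have habs : Summable fun p => ‖a p‖ := by
    have := dsum t hnn ρ hconv x hx (‖y‖) (norm_nonneg y) hy
    exact this.congr fun p => (hnorm p).symm
  have hA : Summable a := Summable.of_norm habs
  -- shifted family
  set b : ℕ × ℕ → ℂ := fun q =>
    if q.1 ≤ q.2 then (((q.2.choose q.1 : ℝ) * t q.2 * x ^ (q.2 - q.1) : ℝ) : ℂ) * y ^ q.1
    else 0 with hb
  have hcomp : ∀ p : ℕ × ℕ, b (p.1, p.2 + p.1) = a p := by
    rintro ⟨k, n⟩
    simp [hb, ha, Nat.add_sub_cancel]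
  have hsupp : Function.support b ⊆ Set.range (fun p : ℕ × ℕ => (p.1, p.2 + p.1)) := by
    rintro ⟨k, m⟩ hq
    rcases le_or_gt k m with h | h
    · exact ⟨(k, m - k), by simp; omega⟩
    · exact absurd (by simp [hb, Nat.not_le.2 h]) hq
  have hBeq : ∑' p, a p = ∑' q, b q := by
    rw [← Function.Injective.tsum_eq psi_inj (f := b) hsupp]
    exact tsum_congr fun p => (hcomp p).symm
  have hsupp' : ∀ q ∉ Set.range (fun p : ℕ × ℕ => (p.1, p.2 + p.1)), b q = 0 := fun q hq => by
    by_contra hr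
    exact hq (hsupp hr)
  have hB : Summable b := by
    rw [← Function.Injective.summable_iff psi_inj (f := b) hsupp']
    exact hA.congr fun p => (hcomp p).symm
  -- row sums of `a`
  have hck : ∀ k, Summable fun n => ((n + k).choose k : ℝ) * t (n + k) * x ^ n :=
    csum t hnn ρ hconv x hx hxρ
  have hrow : ∀ k, ∑' n, a (k, n)
      = ((∑' n, ((n + k).choose k : ℝ) * t (n + k) * x ^ n : ℝ) : ℂ) * y ^ k := by
    intro k
    rw [Complex.ofReal_tsum, ← tsum_mul_right]
  -- diagonal sums of `b`
  have hdiag : ∀ m, ∑' k, b (k, m) = (t m : ℂ) * ((x : ℂ) + y) ^ m := by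
    intro m
    have h2 : ∑' k, b (k, m) = ∑ k ∈ Finset.range (m + 1), b (k, m) := by
      apply tsum_eq_sum
      intro k hk
      simp only [Finset.mem_range, Nat.lt_add_one_iff, not_le] at hk
      simp [hb, Nat.not_le.2 hk]
    rw [h2, show ((x : ℂ) + y) = y + (x : ℂ) by ring, add_pow, Finset.mul_sum]
    apply Finset.sum_congr rfl
    intro k hk
    simp only [Finset.mem_range, Nat.lt_add_one_iff] at hk
    rw [hb]
    simp only [if_pos hk]
    push_cast
    ring
  -- outer summability of the rearranged series
  have houter : Summable (fun k =>
      ((∑' n, ((n + k).choose k : ℝ) * t (n + k) * x ^ n : ℝ) : ℂ) * y ^ k) := by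
    apply Summable.of_norm
    have h3 := rsum t hnn ρ hconv x hx (‖y‖) (norm_nonneg y) hy
    apply h3.congr
    intro k
    have h4 : 0 ≤ ∑' n, ((n + k).choose k : ℝ) * t (n + k) * x ^ n :=
      tsum_nonneg fun n => by have := hnn (n + k); positivity
    rw [norm_mul, norm_pow, Complex.norm_real, Real.norm_eq_abs, _root_.abs_of_nonneg h4]
  rw [Summable.hasSum_iff houter]
  calc ∑' k, ((∑' n, ((n + k).choose k : ℝ) * t (n + k) * x ^ n : ℝ) : ℂ) * y ^ k
      = ∑' (k : ℕ) (n : ℕ), a (k, n) := by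
        exact (tsum_congr fun k => (hrow k).symm)
    _ = ∑' p, a p := (hA.tsum_prod).symm
    _ = ∑' q, b q := hBeq
    _ = ∑' (k : ℕ) (m : ℕ), b (k, m) := hB.tsum_prod
    _ = ∑' (m : ℕ) (k : ℕ), b (k, m) := by
        have hu : Summable (Function.uncurry fun k m => b (k, m)) := hB
        have h1 : ∀ k, Summable fun m => b (k, m) := fun k => hB.prod_factor k
        have h2 : ∀ m, Summable fun k => b (k, m) := fun m => hB.prod_symm.prod_factor m
        exact (hu.tsum_comm' h1 h2).symm
    _ = ∑' m, (t m : ℂ) * ((x : ℂ) + y) ^ m := tsum_congr hdiag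


/-- Pringsheim: no analytic continuation at the point `ρ` itself. -/
lemma pringsheim (t : ℕ → ℝ) (hnn : ∀ n, 0 ≤ t n) (ρ : ℝ) (hρ : 0 < ρ)
    (hconv : ∀ r : ℝ, 0 ≤ r → r < ρ → Summable fun n => t n * r ^ n)
    (hdiv : ∀ r : ℝ, ρ < r → ¬ Summable fun n => t n * r ^ n)
    (f : ℂ → ℂ) (ε0 : ℝ) (hε0 : 0 < ε0)
    (hfa : ∀ z ∈ ball (ρ : ℂ) ε0, AnalyticAt ℂ f z)
    (hfe : ∀ z ∈ ball (ρ : ℂ) ε0, ‖z‖ < ρ → f z = ∑' n, (t n : ℂ) * z ^ n) :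
    False := by
  set ε := min ε0 ρ with hεdef
  have hε : 0 < ε := lt_min hε0 hρ
  have hερ : ε ≤ ρ := min_le_right _ _
  have hεε0 : ε ≤ ε0 := min_le_left _ _
  set F : ℂ → ℂ := fun z => ∑' n, (t n : ℂ) * z ^ n with hFdef
  have hFb := hasF t hnn ρ hρ hconv
  set h : ℂ → ℂ := fun z => if ‖z‖ < ρ then F z else f z with hhdef
  have hU : ∀ z : ℂ, (‖z‖ < ρ ∨ z ∈ ball (ρ : ℂ) ε) → AnalyticAt ℂ h z := by
    intro z hz
    by_cases h1 : ‖z‖ < ρ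
    · have hopen : IsOpen {w : ℂ | ‖w‖ < ρ} :=
        isOpen_lt continuous_norm continuous_const
      have hFz : AnalyticAt ℂ F z := by
        apply hFb.analyticOnNhd
        rw [mem_emetric_ball_zero_iff, ← ofReal_norm,
          ENNReal.ofReal_lt_ofReal_iff hρ]
        exact h1
      apply hFz.congr
      filter_upwards [hopen.mem_nhds h1] with w hw
      simp only [hhdef]
      rw [if_pos hw]
    · have hz2 : z ∈ ball (ρ : ℂ) ε := hz.resolve_left h1
      have hfz : AnalyticAt ℂ f z := hfa z (ball_subset_ball hεε0 hz2)
      apply hfz.congr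
      filter_upwards [isOpen_ball.mem_nhds hz2] with w hw
      simp only [hhdef]
      by_cases h2 : ‖w‖ < ρ
      · simp only [if_pos h2, hFdef]
        exact hfe w (ball_subset_ball hεε0 hw) h2
      · rw [if_neg h2]
  set x : ℝ := ρ - ε / 8 with hxdef
  have hx0 : 0 < x := by rw [hxdef]; linarith
  have hxρ : x < ρ := by rw [hxdef]; linarith
  have hdiff : DifferentiableOn ℂ h (closedBall (x : ℂ) (ε / 2)) := by
    intro z hz
    rw [mem_closedBall, Complex.dist_eq] at hz
    have hz3 : AnalyticAt ℂ h z := by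
      apply hU
      by_cases h2 : ‖z‖ < ρ
      · exact Or.inl h2
      · right
        rw [mem_ball, Complex.dist_eq]
        have habs : ‖((x : ℂ) - (ρ : ℂ))‖ = ε / 8 := by
          rw [← Complex.ofReal_sub, Complex.norm_real, Real.norm_eq_abs, hxdef,
            abs_of_nonpos (by linarith)]
          ring
        calc ‖(z - (ρ : ℂ))‖
            ≤ ‖(z - (x : ℂ))‖ + ‖((x : ℂ) - (ρ : ℂ))‖ :=
              norm_sub_le_norm_sub_add_norm_sub z (x : ℂ) (ρ : ℂ)
          _ ≤ ε / 2 + ε / 8 := by rw [habs]; linarith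
          _ < ε := by linarith
    exact hz3.differentiableAt.differentiableWithinAt
  set Rq : ℝ≥0 := (ε / 2).toNNReal with hRq
  have hRq0 : 0 < Rq := by
    rw [hRq]
    exact Real.toNNReal_pos.2 (by linarith)
  have hRqc : (Rq : ℝ) = ε / 2 := Real.coe_toNNReal _ (by linarith)
  have hdiff' : DifferentiableOn ℂ h (closedBall (x : ℂ) Rq) := by
    rw [hRqc]; exact hdiff
  have hq := hdiff'.hasFPowerSeriesOnBall hRq0
  set c : ℕ → ℝ := fun k => ∑' n, ((n + k).choose k : ℝ) * t (n + k) * x ^ n with hcdef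
  have hc0 : ∀ k, 0 ≤ c k := fun k =>
    tsum_nonneg fun n => by have := hnn (n + k); positivity
  have hP : HasFPowerSeriesOnBall h (ps fun k => (c k : ℂ)) (x : ℂ)
      (ENNReal.ofReal (ε / 8)) := by
    constructor
    · apply ENNReal.le_of_forall_nnreal_lt
      intro r hr
      have hr' : (r : ℝ) < ε / 8 := by
        rw [← ENNReal.ofReal_coe_nnreal] at hr
        exact (ENNReal.ofReal_lt_ofReal_iff (by linarith)).1 hr
      apply FormalMultilinearSeries.le_radius_of_summable
      have hsum := rsum t hnn ρ hconv x hx0.le r r.2 (by rw [hxdef]; linarith)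
      apply hsum.congr
      intro k
      rw [ps_norm, Complex.norm_real, Real.norm_eq_abs, _root_.abs_of_nonneg (hc0 k)]
    · exact ENNReal.ofReal_pos.2 (by linarith)
    · intro y hy
      rw [mem_emetric_ball_zero_iff, ← ofReal_norm,
        ENNReal.ofReal_lt_ofReal_iff (by linarith : (0 : ℝ) < ε / 8)] at hy
      have hxy : x + ‖y‖ < ρ := by rw [hxdef]; linarith
      have hs := cfub t hnn ρ hconv x hx0.le y hxy
      have h1 : (fun k => (ps fun k => (c k : ℂ)) k fun _ => y)
          = fun k => ((c k : ℝ) : ℂ) * y ^ k := funext fun k => ps_apply _ k y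
      rw [h1]
      have h3 : ‖((x : ℂ) + y)‖ < ρ := by
        calc ‖((x : ℂ) + y)‖ ≤ ‖(x : ℂ)‖ + ‖y‖ :=
              norm_add_le _ _
          _ = x + ‖y‖ := by
              rw [Complex.norm_real, Real.norm_eq_abs, _root_.abs_of_nonneg hx0.le]
          _ < ρ := hxy
      have h2 : h ((x : ℂ) + y) = ∑' m, (t m : ℂ) * ((x : ℂ) + y) ^ m := by
        simp only [hhdef]
        rw [if_pos h3]
      rw [h2]
      exact hs
  have hPq : (ps fun k => (c k : ℂ)) = cauchyPowerSeries h (x : ℂ) Rq :=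
    hP.hasFPowerSeriesAt.eq_formalMultilinearSeries hq.hasFPowerSeriesAt
  have hrad : (Rq : ℝ≥0∞) ≤ (ps fun k => (c k : ℂ)).radius := by
    rw [hPq]; exact hq.r_le
  set r : ℝ≥0 := (ε / 4).toNNReal with hrdef
  have hrlt : (r : ℝ≥0∞) < (ps fun k => (c k : ℂ)).radius := by
    apply lt_of_lt_of_le _ hrad
    rw [ENNReal.coe_lt_coe, hrdef, hRq]
    exact (Real.toNNReal_lt_toNNReal_iff (by linarith)).2 (by linarith)
  have hsum := (ps fun k => (c k : ℂ)).summable_norm_mul_pow hrlt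
  have hr4 : (r : ℝ) = ε / 4 := Real.coe_toNNReal _ (by linarith)
  have hsum2 : Summable fun k => c k * (ε / 4) ^ k := by
    apply hsum.congr
    intro k
    rw [ps_norm, Complex.norm_real, Real.norm_eq_abs, _root_.abs_of_nonneg (hc0 k), hr4]
  have hfin := final t hnn ρ hconv x hx0.le hxρ (ε / 4) (by linarith) hsum2
  exact hdiv (x + ε / 4) (by rw [hxdef]; linarith) hfin

end Stmt3Aux


/-- rotational symmetry `T(ωz) = ω^d T(z)` and the fact that all
`q`-th roots of `ρ^q` on the circle of convergence are singularities of `T`. -/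
theorem stmt_3 (t : ℕ → ℝ) (hnn : ∀ n, 0 ≤ t n) (h0 : t 0 = 0)
    (ρ : ℝ) (hρ : 0 < ρ)
    (hconv : ∀ r : ℝ, 0 ≤ r → r < ρ → Summable fun n => t n * r ^ n)
    (hdiv : ∀ r : ℝ, ρ < r → ¬ Summable fun n => t n * r ^ n)
    (d q : ℕ) (hq : 1 ≤ q) (v : ℕ → ℝ) (hv0 : v 0 ≠ 0)
    (hgcd : ∀ m : ℕ, (∀ n, v n ≠ 0 → m ∣ n) → m = 1)
    (hform : ∀ n, t n = if d ≤ n ∧ q ∣ (n - d) then v ((n - d) / q) else 0)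
    (ω : ℂ) (hω : ω = Complex.exp (2 * Real.pi * Complex.I / q)) :
    (∀ z : ℂ, ‖z‖ < ρ →
        ∑' n, (t n : ℂ) * (ω * z) ^ n = ω ^ d * ∑' n, (t n : ℂ) * z ^ n) ∧
      ∀ z₀ : ℂ, z₀ ^ q = (ρ : ℂ) ^ q →
        ¬ ∃ (f : ℂ → ℂ) (ε : ℝ), 0 < ε ∧
            (∀ z ∈ Metric.ball z₀ ε, AnalyticAt ℂ f z) ∧
            ∀ z ∈ Metric.ball z₀ ε, ‖z‖ < ρ →
              f z = ∑' n, (t n : ℂ) * z ^ n := by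
  have hq0 : (q : ℂ) ≠ 0 := Nat.cast_ne_zero.2 (by omega)
  have hωq : ω ^ q = 1 := by
    rw [hω, ← Complex.exp_nat_mul,
      show (q : ℂ) * (2 * Real.pi * Complex.I / q) = 2 * Real.pi * Complex.I by field_simp]
    exact Complex.exp_two_pi_mul_I
  have hω0 : ω ≠ 0 := by rw [hω]; exact Complex.exp_ne_zero _
  have hωabs : ‖ω‖ = 1 := by
    rw [hω, show 2 * (Real.pi : ℂ) * Complex.I / q
        = ((2 * Real.pi / q : ℝ) : ℂ) * Complex.I by push_cast; ring]
    exact Complex.norm_exp_ofReal_mul_I _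
  have part1 : ∀ z : ℂ, ‖z‖ < ρ →
      ∑' n, (t n : ℂ) * (ω * z) ^ n = ω ^ d * ∑' n, (t n : ℂ) * z ^ n := by
    intro z _
    rw [← tsum_mul_left]
    apply tsum_congr
    intro n
    by_cases hn : t n = 0
    · simp [hn]
    · have hcond : d ≤ n ∧ q ∣ (n - d) := by
        by_contra hc
        rw [hform n, if_neg hc] at hn
        exact hn rfl
      obtain ⟨hdn, k, hk⟩ : d ≤ n ∧ ∃ k, n - d = q * k := ⟨hcond.1, hcond.2⟩
      have hn' : n = d + q * k := by omega
      have hωn : ω ^ n = ω ^ d := by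
        rw [hn', pow_add, pow_mul, hωq, one_pow, mul_one]
      rw [mul_pow, hωn]
      ring
  refine ⟨part1, ?_⟩
  intro z₀ hz₀
  rintro ⟨f, ε, hε, hfa, hfe⟩
  have hρ0 : (ρ : ℂ) ≠ 0 := Complex.ofReal_ne_zero.2 hρ.ne'
  have hu : (z₀ / (ρ : ℂ)) ^ q = 1 := by
    rw [div_pow, hz₀, div_self (pow_ne_zero _ hρ0)]
  have hqNZ : NeZero q := ⟨by omega⟩
  have hprim : IsPrimitiveRoot ω q := by
    rw [hω]; exact Complex.isPrimitiveRoot_exp q (by omega)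
  obtain ⟨j, hjq, hj⟩ := hprim.eq_pow_of_pow_eq_one hu
  have hz₀' : z₀ = ω ^ j * (ρ : ℂ) := by
    rw [hj]
    field_simp
  have hωj : ‖(ω ^ j)‖ = 1 := by rw [norm_pow, hωabs, one_pow]
  have hiter : ∀ (i : ℕ) (z : ℂ), ‖z‖ < ρ →
      ∑' n, (t n : ℂ) * (ω ^ i * z) ^ n = ω ^ (i * d) * ∑' n, (t n : ℂ) * z ^ n := by
    intro i
    induction i with
    | zero => intro z _; simp
    | succ i ih =>
      intro z hz
      have h1 : ω ^ (i + 1) * z = ω ^ i * (ω * z) := by ring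
      have h2 : ‖(ω * z)‖ < ρ := by
        rw [norm_mul, hωabs, one_mul]; exact hz
      rw [h1, ih (ω * z) h2, part1 z hz,
        show (i + 1) * d = i * d + d by ring, pow_add]
      ring
  set g : ℂ → ℂ := fun z => (ω ^ (j * d))⁻¹ * f (ω ^ j * z) with hgdef
  have hmem : ∀ z : ℂ, z ∈ Metric.ball ((ρ : ℝ) : ℂ) ε → ω ^ j * z ∈ Metric.ball z₀ ε := by
    intro z hz
    rw [Metric.mem_ball, Complex.dist_eq] at hz ⊢
    rw [hz₀', ← mul_sub, norm_mul, hωj, one_mul]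
    exact hz
  apply Stmt3Aux.pringsheim t hnn ρ hρ hconv hdiv g ε hε
  · intro z hz
    have h2 : AnalyticAt ℂ f (ω ^ j * z) := hfa _ (hmem z hz)
    have h1 : AnalyticAt ℂ (fun w => f (ω ^ j * w)) z :=
      h2.comp (analyticAt_const.mul analyticAt_id)
    exact analyticAt_const.mul h1
  · intro z hz hzρ
    have h2 : ‖(ω ^ j * z)‖ < ρ := by rw [norm_mul, hωj, one_mul]; exact hzρ
    simp only [hgdef]
    rw [hfe _ (hmem z hz) h2, hiter j z hzρ, ← mul_assoc,
      inv_mul_cancel₀ (pow_ne_zero _ hω0), one_mul]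
end

section
/- Define A_R(z) := ∑_{n≥1} R^n z^n for R > 0. Then for all R₁, R₂ > 0: (i) the coefficientwise product satisfies A_{R₁}·A_{R₂} ⊴ A_{R₁+R₂} (each coefficient of the product is at most the corresponding coefficient of A_{R₁+R₂}); and (ii) the formal composition satisfies A_{R₁} ∘ A_{R₂} ⊴ A_{2(1+R₁+R₂)²}. -/
/-- The series `A_R(z) = ∑_{n ≥ 1} R^n z^n`. -/
noncomputable def Aser (R : ℝ) : PowerSeries ℝ :=
  PowerSeries.mk fun n => if n = 0 then 0 else R ^ n

lemma coeff_Aser (R : ℝ) (n : ℕ) :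
    PowerSeries.coeff (R := ℝ) n (Aser R) = if n = 0 then 0 else R ^ n := by
  simp [Aser]

lemma Aser_pow_nonneg {R : ℝ} (hR : 0 ≤ R) (i n : ℕ) :
    0 ≤ PowerSeries.coeff (R := ℝ) n (Aser R ^ i) := by
  induction i generalizing n with
  | zero =>
    simp only [pow_zero, PowerSeries.coeff_one]
    positivity
  | succ i ih =>
    rw [pow_succ, PowerSeries.coeff_mul]
    apply Finset.sum_nonneg
    intro p _
    have h1 := ih p.1
    have h2 : (0:ℝ) ≤ PowerSeries.coeff (R := ℝ) p.2 (Aser R) := by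
      rw [coeff_Aser]; split <;> positivity
    exact mul_nonneg h1 h2

lemma Aser_pow_le {R : ℝ} (hR : 0 ≤ R) (i : ℕ) (hi : 1 ≤ i) (n : ℕ) :
    PowerSeries.coeff (R := ℝ) n (Aser R ^ i) ≤ 2 ^ n * R ^ n := by
  induction i generalizing n with
  | zero => omega
  | succ i ih =>
    rcases Nat.eq_or_lt_of_le hi with h | h
    · rw [← h, pow_one, coeff_Aser]
      split
      · positivity
      · have h2 : (1:ℝ) ≤ 2 ^ n := one_le_pow₀ one_le_two
        nlinarith [pow_nonneg hR n]
    · have hi' : 1 ≤ i := by omega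
      rw [pow_succ, PowerSeries.coeff_mul,
        Finset.Nat.sum_antidiagonal_eq_sum_range_succ_mk,
        Finset.sum_range_succ]
      have hlast : PowerSeries.coeff (R := ℝ) n (Aser R ^ i) *
          PowerSeries.coeff (R := ℝ) (n - n) (Aser R) = 0 := by
        simp [coeff_Aser]
      rw [hlast, add_zero]
      calc ∑ k ∈ Finset.range n,
            PowerSeries.coeff (R := ℝ) k (Aser R ^ i) * PowerSeries.coeff (R := ℝ) (n - k) (Aser R)
          ≤ ∑ k ∈ Finset.range n, 2 ^ k * R ^ n := by
            apply Finset.sum_le_sum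
            intro k hk
            have hkn : k < n := Finset.mem_range.mp hk
            have hc : PowerSeries.coeff (R := ℝ) (n - k) (Aser R) ≤ R ^ (n - k) := by
              rw [coeff_Aser]; split
              · positivity
              · exact le_rfl
            have hcn : 0 ≤ PowerSeries.coeff (R := ℝ) (n - k) (Aser R) := by
              rw [coeff_Aser]; split <;> positivity
            calc PowerSeries.coeff (R := ℝ) k (Aser R ^ i) * PowerSeries.coeff (R := ℝ) (n - k) (Aser R)
                ≤ (2 ^ k * R ^ k) * R ^ (n - k) := by
                  apply mul_le_mul (ih hi' k) hc hcn
                  positivity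
              _ = 2 ^ k * R ^ n := by
                  rw [mul_assoc, ← pow_add]
                  congr 2
                  omega
        _ = (∑ k ∈ Finset.range n, (2:ℝ) ^ k) * R ^ n := by
            rw [Finset.sum_mul]
        _ ≤ 2 ^ n * R ^ n := by
            have hg : ∑ k ∈ Finset.range n, (2:ℝ) ^ k = 2 ^ n - 1 := by
              rw [geom_sum_eq (by norm_num)]
              norm_num
            rw [hg]
            nlinarith [pow_nonneg hR n]

lemma geom_sum_le {R : ℝ} (hR : 0 ≤ R) (n : ℕ) :
    ∑ i ∈ Finset.Icc 1 n, R ^ i ≤ (1 + R) ^ n := by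
  have hb : (1 + R) ^ n = ∑ i ∈ Finset.range (n + 1), R ^ i * 1 ^ (n - i) * (n.choose i : ℝ) := by
    rw [add_comm]; exact add_pow R 1 n
  calc ∑ i ∈ Finset.Icc 1 n, R ^ i
      ≤ ∑ i ∈ Finset.Icc 1 n, R ^ i * 1 ^ (n - i) * (n.choose i : ℝ) := by
        apply Finset.sum_le_sum
        intro i hi
        simp only [Finset.mem_Icc] at hi
        have hc : (1:ℝ) ≤ (n.choose i : ℝ) := by
          have := Nat.choose_pos hi.2
          exact_mod_cast this
        have hp : (0:ℝ) ≤ R ^ i := pow_nonneg hR i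
        rw [one_pow, mul_one]
        exact le_mul_of_one_le_right hp hc
    _ ≤ ∑ i ∈ Finset.range (n + 1), R ^ i * 1 ^ (n - i) * (n.choose i : ℝ) := by
        apply Finset.sum_le_sum_of_subset_of_nonneg
        · intro x hx
          simp only [Finset.mem_Icc] at hx
          simp only [Finset.mem_range]
          omega
        · intro i _ _
          positivity
    _ = (1 + R) ^ n := hb.symm

/-- coefficientwise bounds for products and compositions of the `A_R`. -/
theorem stmt_6 (R₁ R₂ : ℝ) (h₁ : 0 < R₁) (h₂ : 0 < R₂) :
    (∀ n, PowerSeries.coeff (R := ℝ) n (Aser R₁ * Aser R₂) ≤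
        PowerSeries.coeff (R := ℝ) n (Aser (R₁ + R₂))) ∧
      ∀ n, (∑ i ∈ Finset.Icc 1 n, R₁ ^ i * PowerSeries.coeff (R := ℝ) n (Aser R₂ ^ i)) ≤
        PowerSeries.coeff (R := ℝ) n (Aser (2 * (1 + R₁ + R₂) ^ 2)) := by
  constructor
  · intro n
    rw [PowerSeries.coeff_mul, Finset.Nat.sum_antidiagonal_eq_sum_range_succ_mk, coeff_Aser]
    rcases Nat.eq_zero_or_pos n with hn | hn
    · subst hn
      simp [coeff_Aser]
    · rw [if_neg (by omega)]
      have hb : (R₁ + R₂) ^ n = ∑ k ∈ Finset.range (n + 1),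
          R₁ ^ k * R₂ ^ (n - k) * (n.choose k : ℝ) := add_pow R₁ R₂ n
      rw [hb]
      apply Finset.sum_le_sum
      intro k hk
      have hkn : k ≤ n := by simpa [Nat.lt_succ_iff] using Finset.mem_range.mp hk
      have hc : (1:ℝ) ≤ (n.choose k : ℝ) := by
        have := Nat.choose_pos hkn
        exact_mod_cast this
      have h1 : PowerSeries.coeff (R := ℝ) k (Aser R₁) ≤ R₁ ^ k := by
        rw [coeff_Aser]; split <;> [positivity; exact le_rfl]
      have h1n : 0 ≤ PowerSeries.coeff (R := ℝ) k (Aser R₁) := by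
        rw [coeff_Aser]; split <;> positivity
      have h2 : PowerSeries.coeff (R := ℝ) (n - k) (Aser R₂) ≤ R₂ ^ (n - k) := by
        rw [coeff_Aser]; split <;> [positivity; exact le_rfl]
      have h2n : 0 ≤ PowerSeries.coeff (R := ℝ) (n - k) (Aser R₂) := by
        rw [coeff_Aser]; split <;> positivity
      have : PowerSeries.coeff (R := ℝ) k (Aser R₁) * PowerSeries.coeff (R := ℝ) (n - k) (Aser R₂)
          ≤ R₁ ^ k * R₂ ^ (n - k) :=
        mul_le_mul h1 h2 h2n (pow_nonneg h₁.le k)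
      exact le_trans this (le_mul_of_one_le_right (by positivity) hc)
  · intro n
    rw [coeff_Aser]
    rcases Nat.eq_zero_or_pos n with hn | hn
    · subst hn; simp
    · rw [if_neg (by omega)]
      calc ∑ i ∈ Finset.Icc 1 n, R₁ ^ i * PowerSeries.coeff (R := ℝ) n (Aser R₂ ^ i)
          ≤ ∑ i ∈ Finset.Icc 1 n, R₁ ^ i * (2 ^ n * R₂ ^ n) := by
            apply Finset.sum_le_sum
            intro i hi
            simp only [Finset.mem_Icc] at hi
            exact mul_le_mul_of_nonneg_left (Aser_pow_le h₂.le i hi.1 n) (pow_nonneg h₁.le i)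
        _ = (∑ i ∈ Finset.Icc 1 n, R₁ ^ i) * (2 ^ n * R₂ ^ n) := by
            rw [Finset.sum_mul]
        _ ≤ (1 + R₁) ^ n * (2 ^ n * R₂ ^ n) := by
            apply mul_le_mul_of_nonneg_right (geom_sum_le h₁.le n)
            positivity
        _ = (2 * ((1 + R₁) * R₂)) ^ n := by
            rw [mul_pow, mul_pow]; ring
        _ ≤ (2 * (1 + R₁ + R₂) ^ 2) ^ n := by
            apply pow_le_pow_left₀ (by positivity)
            nlinarith
end

section
/- Let Θ be a retro operator on DOM[z] such that Θ(S) ⊴ A_R(z + S) for all S ∈ DOM[z], where A_R(z) = ∑_{n≥1} R^n z^n. Then in fact Θ(S) ⊴ A_R(z + S) − R·S for all S ∈ DOM[z], i.e., the n-th coefficient of Θ(S) is at most the n-th coefficient of ∑_{m≥2} R^m(z+S)^m + Rz. -/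
def DomSeq (a : ℕ → ℝ) : Prop := a 0 = 0 ∧ ∀ n, 0 ≤ a n

def Retro (Θ : (ℕ → ℝ) → ℕ → ℝ) : Prop :=
  ∀ a b : ℕ → ℝ, DomSeq a → DomSeq b → ∀ n : ℕ,
    (∀ m, 1 ≤ m → m < n → a m = b m) → Θ a n = Θ b n

/-- The `n`-th coefficient of `A_R(z + S) = ∑_{m ≥ 1} R^m (z + S(z))^m`.
Since `z + S(z)` has zero constant term, only the terms `1 ≤ m ≤ n` contribute. -/
noncomputable def ARcoeff (R : ℝ) (S : ℕ → ℝ) (n : ℕ) : ℝ :=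
  ∑ m ∈ Finset.Icc 1 n,
    R ^ m * PowerSeries.coeff (R := ℝ) n ((PowerSeries.X + PowerSeries.mk S) ^ m)

open PowerSeries in
lemma pow_coeff_congr_lt {f g : PowerSeries ℝ} {n : ℕ}
    (h : ∀ k < n, coeff (R := ℝ) k f = coeff (R := ℝ) k g) :
    ∀ m, ∀ l < n, coeff (R := ℝ) l (f ^ m) = coeff (R := ℝ) l (g ^ m) := by
  intro m
  induction m with
  | zero => intro l hl; simp
  | succ m ih =>
      intro l hl
      rw [pow_succ, pow_succ, coeff_mul, coeff_mul]
      refine Finset.sum_congr rfl ?_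
      intro p hp
      rw [Finset.HasAntidiagonal.mem_antidiagonal] at hp
      have h1 : p.1 < n := lt_of_le_of_lt (by omega) hl
      have h2 : p.2 < n := lt_of_le_of_lt (by omega) hl
      rw [ih p.1 h1, h p.2 h2]

open PowerSeries in
lemma pow_coeff_congr_eq {f g : PowerSeries ℝ} {n : ℕ}
    (hf : constantCoeff (R := ℝ) f = 0) (hg : constantCoeff (R := ℝ) g = 0)
    (h : ∀ k < n, coeff (R := ℝ) k f = coeff (R := ℝ) k g) :
    ∀ m, 2 ≤ m → coeff (R := ℝ) n (f ^ m) = coeff (R := ℝ) n (g ^ m) := by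
  intro m hm
  obtain ⟨m, rfl⟩ : ∃ m', m = m' + 1 := ⟨m - 1, by omega⟩
  rw [pow_succ, pow_succ, coeff_mul, coeff_mul]
  refine Finset.sum_congr rfl ?_
  intro p hp
  rw [Finset.HasAntidiagonal.mem_antidiagonal] at hp
  rcases eq_or_lt_of_le (show p.1 ≤ n by omega) with h1 | h1
  · have hp2 : p.2 = 0 := by omega
    have hf0 : coeff (R := ℝ) 0 f = 0 := by rw [coeff_zero_eq_constantCoeff, hf]
    have hg0 : coeff (R := ℝ) 0 g = 0 := by rw [coeff_zero_eq_constantCoeff, hg]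
    rw [hp2, hf0, hg0, mul_zero, mul_zero]
  · rcases eq_or_lt_of_le (show p.2 ≤ n by omega) with h2 | h2
    · have hp1 : p.1 = 0 := by omega
      have hf0 : coeff (R := ℝ) 0 (f ^ m) = 0 := by
        rw [coeff_zero_eq_constantCoeff, map_pow, hf, zero_pow (by omega)]
      have hg0 : coeff (R := ℝ) 0 (g ^ m) = 0 := by
        rw [coeff_zero_eq_constantCoeff, map_pow, hg, zero_pow (by omega)]
      rw [hp1, hf0, hg0, zero_mul, zero_mul]
    · rw [pow_coeff_congr_lt h m p.1 h1, h p.2 h2]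

/-- a retro operator bounded by `A_R(z+S)` is in fact bounded by
`A_R(z+S) - R·S`. -/
theorem stmt_9 (R : ℝ) (hR : 0 < R) (Θ : (ℕ → ℝ) → ℕ → ℝ)
    (hmap : ∀ a, DomSeq a → DomSeq (Θ a)) (hretro : Retro Θ)
    (hbd : ∀ S, DomSeq S → ∀ n, Θ S n ≤ ARcoeff R S n) :
    ∀ S, DomSeq S → ∀ n, Θ S n ≤ ARcoeff R S n - R * S n := by
  intro S hS n
  rcases Nat.eq_zero_or_pos n with rfl | hn
  · have h0 : Θ S 0 = 0 := (hmap S hS).1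
    have : ARcoeff R S 0 = 0 := by simp [ARcoeff]
    rw [h0, this, hS.1]; simp
  · -- modified sequence
    set S' : ℕ → ℝ := fun k => if k = n then 0 else S k with hS'def
    have hS' : DomSeq S' := by
      constructor
      · simp [hS'def]; intro h; exact hS.1
      · intro k; by_cases h : k = n <;> simp [hS'def, h, hS.2 k]
    have hθeq : Θ S n = Θ S' n := by
      apply hretro S S' hS hS' n
      intro m hm1 hmn
      simp [hS'def, Nat.ne_of_lt hmn]
    have hAR : ARcoeff R S' n = ARcoeff R S n - R * S n := by
      unfold ARcoeff
      have hmem : 1 ∈ Finset.Icc 1 n := by rw [Finset.mem_Icc]; omega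
      rw [Finset.sum_eq_sum_sdiff_singleton_add hmem,
          Finset.sum_eq_sum_sdiff_singleton_add hmem]
      have hrest : ∀ m ∈ Finset.Icc 1 n \ {1},
          R ^ m * PowerSeries.coeff (R := ℝ) n ((PowerSeries.X + PowerSeries.mk S') ^ m)
          = R ^ m * PowerSeries.coeff (R := ℝ) n ((PowerSeries.X + PowerSeries.mk S) ^ m) := by
        intro m hm
        simp only [Finset.mem_sdiff, Finset.mem_Icc, Finset.mem_singleton] at hm
        congr 1
        apply pow_coeff_congr_eq
        · simp [hS'.1]
        · simp [hS.1]
        · intro k hk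
          simp [PowerSeries.coeff_mk, hS'def, Nat.ne_of_lt hk]
        · omega
      rw [Finset.sum_congr rfl hrest]
      have : (PowerSeries.coeff (R := ℝ) n) ((PowerSeries.X + PowerSeries.mk S') ^ 1)
          = (PowerSeries.coeff (R := ℝ) n) ((PowerSeries.X + PowerSeries.mk S) ^ 1) - S n := by
        simp only [pow_one, map_add, PowerSeries.coeff_mk]
        simp [hS'def]
      rw [this]
      ring
    have := hbd S' hS' n
    rw [hθeq, ← hAR]
    exact this
end

section
/- Every bounded retro operator Θ on DOM[z] has a unique fixpoint T, and T has strictly positive radius of convergence. -/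
open PowerSeries Finset

lemma coeff_pow_nonneg' (f : PowerSeries ℝ) (hf : ∀ k, 0 ≤ coeff k f) :
    ∀ m n, 0 ≤ coeff n (f ^ m) := by
  intro m
  induction m with
  | zero => intro n; simp [PowerSeries.coeff_one]; positivity
  | succ m ih =>
    intro n
    rw [pow_succ, PowerSeries.coeff_mul]
    exact sum_nonneg fun p _ => mul_nonneg (ih p.1) (hf p.2)

lemma coeff_pow_mono' (f g : PowerSeries ℝ) (hf : ∀ k, 0 ≤ coeff k f)
    (hfg : ∀ k, coeff k f ≤ coeff k g) :
    ∀ m n, coeff n (f ^ m) ≤ coeff n (g ^ m) := by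
  intro m
  induction m with
  | zero => intro n; simp
  | succ m ih =>
    intro n
    rw [pow_succ, pow_succ, PowerSeries.coeff_mul, PowerSeries.coeff_mul]
    refine sum_le_sum fun p _ => ?_
    exact mul_le_mul (ih p.1) (hfg p.2) (hf p.2)
      (le_trans (coeff_pow_nonneg' f hf m p.1) (ih p.1))

lemma biUnion_antidiag' (f g : PowerSeries ℝ) (r : ℝ) (M : ℕ) :
    ∑ n ∈ range M, coeff n (f * g) * r ^ n =
      ∑ p ∈ (range M).biUnion Finset.HasAntidiagonal.antidiagonal,
        (coeff p.1 f * r ^ p.1) * (coeff p.2 g * r ^ p.2) := by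
  rw [Finset.sum_biUnion]
  · refine sum_congr rfl fun n _ => ?_
    rw [PowerSeries.coeff_mul, Finset.sum_mul]
    refine sum_congr rfl fun p hp => ?_
    have h : p.1 + p.2 = n := Finset.HasAntidiagonal.mem_antidiagonal.mp hp
    rw [← h, pow_add]; ring
  · intro x _ y _ hxy
    simp only [Finset.disjoint_left]
    intro p hp hq
    exact hxy ((Finset.HasAntidiagonal.mem_antidiagonal.mp hp).symm.trans (Finset.HasAntidiagonal.mem_antidiagonal.mp hq))

lemma sum_coeff_mul_le (f g : PowerSeries ℝ) (hf : ∀ k, 0 ≤ coeff k f)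
    (hg : ∀ k, 0 ≤ coeff k g) (r : ℝ) (hr : 0 ≤ r) (M : ℕ) :
    ∑ n ∈ range M, coeff n (f * g) * r ^ n ≤
      (∑ i ∈ range M, coeff i f * r ^ i) * (∑ j ∈ range M, coeff j g * r ^ j) := by
  rw [biUnion_antidiag', Finset.sum_mul_sum, ← Finset.sum_product']
  refine Finset.sum_le_sum_of_subset_of_nonneg ?_ ?_
  · intro p hp
    simp only [Finset.mem_biUnion, Finset.mem_range, Finset.HasAntidiagonal.mem_antidiagonal] at hp
    obtain ⟨n, hn, hpn⟩ := hp
    simp only [Finset.mem_product, Finset.mem_range]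
    omega
  · intro p _ _
    exact mul_nonneg (mul_nonneg (hf p.1) (pow_nonneg hr _))
      (mul_nonneg (hg p.2) (pow_nonneg hr _))

lemma sum_coeff_mul_le' (f g : PowerSeries ℝ) (hf0 : coeff 0 f = 0) (hg0 : coeff 0 g = 0)
    (hf : ∀ k, 0 ≤ coeff k f) (hg : ∀ k, 0 ≤ coeff k g) (r : ℝ) (hr : 0 ≤ r) (M : ℕ) :
    ∑ n ∈ range (M + 1), coeff n (f * g) * r ^ n ≤
      (∑ i ∈ range M, coeff i f * r ^ i) * (∑ j ∈ range M, coeff j g * r ^ j) := by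
  rw [biUnion_antidiag', Finset.sum_mul_sum, ← Finset.sum_product']
  rw [← Finset.sum_filter_ne_zero]
  refine Finset.sum_le_sum_of_subset_of_nonneg ?_ ?_
  · intro p hp
    simp only [Finset.mem_filter, Finset.mem_biUnion, Finset.mem_range,
      Finset.HasAntidiagonal.mem_antidiagonal] at hp
    obtain ⟨⟨n, hn, hpn⟩, hne⟩ := hp
    have h1 : p.1 ≠ 0 := by rintro h; apply hne; rw [h, hf0]; ring
    have h2 : p.2 ≠ 0 := by rintro h; apply hne; rw [h, hg0]; ring
    simp only [Finset.mem_product, Finset.mem_range]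
    omega
  · intro p _ _
    exact mul_nonneg (mul_nonneg (hf p.1) (pow_nonneg hr _))
      (mul_nonneg (hg p.2) (pow_nonneg hr _))

lemma sum_coeff_pow_le (f : PowerSeries ℝ) (hf : ∀ k, 0 ≤ coeff k f)
    (r : ℝ) (hr : 0 ≤ r) (M : ℕ) (hM : 1 ≤ M) :
    ∀ m, ∑ n ∈ range M, coeff n (f ^ m) * r ^ n ≤
      (∑ i ∈ range M, coeff i f * r ^ i) ^ m := by
  intro m
  induction m with
  | zero =>
    obtain ⟨M, rfl⟩ := Nat.exists_eq_add_of_le hM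
    simp only [pow_zero]
    rw [add_comm, Finset.sum_range_succ']
    simp [PowerSeries.coeff_one]
  | succ m ih =>
    rw [pow_succ, pow_succ]
    calc ∑ n ∈ range M, coeff n (f ^ m * f) * r ^ n
        ≤ (∑ i ∈ range M, coeff i (f ^ m) * r ^ i) * (∑ j ∈ range M, coeff j f * r ^ j) :=
          sum_coeff_mul_le _ _ (coeff_pow_nonneg' f hf m) hf r hr M
      _ ≤ _ := by
          refine mul_le_mul_of_nonneg_right ih ?_
          exact Finset.sum_nonneg fun j _ => mul_nonneg (hf j) (pow_nonneg hr _)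

lemma sum_coeff_pow_le' (f : PowerSeries ℝ) (hf0 : coeff 0 f = 0)
    (hf : ∀ k, 0 ≤ coeff k f) (r : ℝ) (hr : 0 ≤ r) (N : ℕ) (hN : 1 ≤ N)
    (m : ℕ) (hm : 2 ≤ m) :
    ∑ n ∈ range (N + 1), coeff n (f ^ m) * r ^ n ≤
      (∑ i ∈ range N, coeff i f * r ^ i) ^ m := by
  obtain ⟨m, rfl⟩ := Nat.exists_eq_add_of_le hm
  have hfm0 : coeff 0 (f ^ (m + 1)) = 0 := by
    rw [PowerSeries.coeff_zero_eq_constantCoeff, map_pow,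
      ← PowerSeries.coeff_zero_eq_constantCoeff, hf0, zero_pow (Nat.succ_ne_zero m)]
  calc ∑ n ∈ range (N + 1), coeff n (f ^ (2 + m)) * r ^ n
      = ∑ n ∈ range (N + 1), coeff n (f * f ^ (m + 1)) * r ^ n := by
        rw [show 2 + m = (m + 1) + 1 by omega, pow_succ']
    _ ≤ (∑ i ∈ range N, coeff i f * r ^ i) *
          (∑ j ∈ range N, coeff j (f ^ (m + 1)) * r ^ j) :=
        sum_coeff_mul_le' f _ hf0 hfm0 hf (coeff_pow_nonneg' f hf _) r hr N
    _ ≤ (∑ i ∈ range N, coeff i f * r ^ i) * (∑ i ∈ range N, coeff i f * r ^ i) ^ (m + 1) := by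
        refine mul_le_mul_of_nonneg_left (sum_coeff_pow_le f hf r hr N hN _) ?_
        exact Finset.sum_nonneg fun i _ => mul_nonneg (hf i) (pow_nonneg hr _)
    _ = (∑ i ∈ range N, coeff i f * r ^ i) ^ (2 + m) := by
        rw [← pow_succ', show (m + 1) + 1 = 2 + m by omega]

lemma half_geom_le (K : ℕ) : ∑ j ∈ range K, (1/2 : ℝ) ^ j ≤ 2 := by
  have h : ∑ j ∈ range K, (1/2 : ℝ) ^ j = 2 - 2 * (1/2) ^ K := by
    induction K with
    | zero => simp
    | succ K ih => rw [Finset.sum_range_succ, ih]; ring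
  rw [h]
  have : (0:ℝ) ≤ (1/2 : ℝ) ^ K := by positivity
  linarith

lemma geom_Icc_le (x : ℝ) (h0 : 0 ≤ x) (hhalf : x ≤ 1/2) (N : ℕ) :
    ∑ m ∈ Finset.Icc 2 N, x ^ m ≤ 2 * x ^ 2 := by
  rw [← Finset.Ico_add_one_right_eq_Icc, Finset.sum_Ico_eq_sum_range]
  have h1 : ∀ j ∈ range (N + 1 - 2), x ^ (2 + j) = x ^ 2 * x ^ j := by
    intro j _; rw [pow_add]
  rw [Finset.sum_congr rfl h1, ← Finset.mul_sum]
  have h2 : ∑ j ∈ range (N + 1 - 2), x ^ j ≤ 2 := by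
    calc ∑ j ∈ range (N + 1 - 2), x ^ j ≤ ∑ j ∈ range (N + 1 - 2), (1/2 : ℝ) ^ j :=
          Finset.sum_le_sum fun j _ => pow_le_pow_left₀ h0 hhalf j
      _ ≤ 2 := half_geom_le _
  calc x ^ 2 * ∑ j ∈ range (N + 1 - 2), x ^ j ≤ x ^ 2 * 2 := by
        refine mul_le_mul_of_nonneg_left h2 (by positivity)
    _ = 2 * x ^ 2 := by ring

noncomputable def gAux (Θ : (ℕ → ℝ) → ℕ → ℝ) : ℕ → ℕ → ℝ
  | 0 => fun _ => 0
  | n + 1 => fun k => if k = n then Θ (gAux Θ n) n else gAux Θ n k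

noncomputable def fixT (Θ : (ℕ → ℝ) → ℕ → ℝ) (n : ℕ) : ℝ := Θ (gAux Θ n) n

/-- every bounded retro operator has a unique fixpoint, which has a
strictly positive radius of convergence. -/
theorem stmt_11 (Θ : (ℕ → ℝ) → ℕ → ℝ)
    (hmap : ∀ a, DomSeq a → DomSeq (Θ a)) (hretro : Retro Θ)
    (hbdd : ∃ R : ℝ, 0 < R ∧ ∀ S, DomSeq S → ∀ n, Θ S n ≤ ARcoeff R S n) :
    ∃ T : ℕ → ℝ, DomSeq T ∧ Θ T = T ∧
      (∀ S, DomSeq S → Θ S = S → S = T) ∧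
      ∃ r : ℝ, 0 < r ∧ Summable fun n => T n * r ^ n := by
  obtain ⟨R, hR, hb⟩ := hbdd
  have hg0dom : DomSeq (gAux Θ 0) := ⟨rfl, fun _ => le_rfl⟩
  -- structure of gAux and nonnegativity, by strong induction
  have hg : ∀ n, DomSeq (gAux Θ n) ∧ ∀ k, gAux Θ n k = if k < n then fixT Θ k else 0 := by
    intro n
    induction n using Nat.strong_induction_on with
    | _ n ih =>
      match n with
      | 0 => exact ⟨hg0dom, fun k => by simp [gAux]⟩
      | n + 1 =>
        have hval : ∀ k, gAux Θ (n + 1) k = if k < n + 1 then fixT Θ k else 0 := by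
          intro k
          show (if k = n then Θ (gAux Θ n) n else gAux Θ n k) = _
          by_cases hk : k = n
          · subst hk
            rw [if_pos rfl, if_pos (Nat.lt_succ_self k)]
            rfl
          · rw [if_neg hk, (ih n (Nat.lt_succ_self n)).2 k]
            by_cases h2 : k < n
            · rw [if_pos h2, if_pos (by omega)]
            · rw [if_neg h2, if_neg (by omega)]
        refine ⟨⟨?_, ?_⟩, hval⟩
        · rw [hval 0, if_pos (Nat.succ_pos n)]
          exact (hmap _ hg0dom).1
        · intro k
          rw [hval k]
          by_cases hk : k < n + 1
          · rw [if_pos hk]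
            exact (hmap _ (ih k hk).1).2 k
          · rw [if_neg hk]
  have hgdom : ∀ n, DomSeq (gAux Θ n) := fun n => (hg n).1
  have hgval : ∀ n k, gAux Θ n k = if k < n then fixT Θ k else 0 := fun n => (hg n).2
  have hTnn : ∀ n, 0 ≤ fixT Θ n := fun n => (hmap _ (hgdom n)).2 n
  have hT0 : fixT Θ 0 = 0 := (hmap _ (hgdom 0)).1
  have hT : DomSeq (fixT Θ) := ⟨hT0, hTnn⟩
  have hfix : Θ (fixT Θ) = fixT Θ := by
    funext n
    exact hretro _ _ hT (hgdom n) n fun m h1 h2 => ((hgval n m).trans (if_pos h2)).symm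
  have huniq : ∀ S, DomSeq S → Θ S = S → S = fixT Θ := by
    intro S hS hSfix
    funext n
    induction n using Nat.strong_induction_on with
    | _ n ih =>
      have h1 : S n = Θ S n := (congrFun hSfix n).symm
      have h2 : Θ S n = Θ (gAux Θ n) n := by
        refine hretro _ _ hS (hgdom n) n fun m hm1 hm2 => ?_
        rw [ih m hm2, hgval n m, if_pos hm2]
      rw [h1, h2]; rfl
  -- the majorant power series
  set f : PowerSeries ℝ := PowerSeries.X + PowerSeries.mk (fixT Θ) with hfdef
  have hfc : ∀ k, coeff k f = (if k = 1 then 1 else 0) + fixT Θ k := by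
    intro k
    rw [hfdef, map_add, PowerSeries.coeff_X, PowerSeries.coeff_mk]
  have hfnn : ∀ k, 0 ≤ coeff k f := by
    intro k; rw [hfc k]
    have := hTnn k
    split <;> linarith
  have hf0 : coeff 0 f = 0 := by rw [hfc 0, hT0]; norm_num
  -- key coefficient bound
  have hkey : ∀ n, fixT Θ n ≤ (if n = 1 then R else 0) +
      ∑ m ∈ Finset.Icc 2 n, R ^ m * coeff n (f ^ m) := by
    intro n
    have h1 : fixT Θ n ≤ ARcoeff R (gAux Θ n) n := hb _ (hgdom n) n
    match n with
    | 0 =>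
      rw [hT0]
      simp
    | n + 1 =>
      unfold ARcoeff at h1
      have hsplit : Finset.Icc 1 (n + 1) = insert 1 (Finset.Icc 2 (n + 1)) := by
        ext x; simp; omega
      rw [hsplit, Finset.sum_insert (by simp)] at h1
      set fn : PowerSeries ℝ := PowerSeries.X + PowerSeries.mk (gAux Θ (n + 1)) with hfndef
      have hfnc : ∀ k, coeff k fn = (if k = 1 then 1 else 0) + gAux Θ (n + 1) k := by
        intro k
        rw [hfndef, map_add, PowerSeries.coeff_X, PowerSeries.coeff_mk]
      have e1 : R ^ 1 * coeff (n + 1) (fn ^ 1) = if n + 1 = 1 then R else 0 := by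
        rw [pow_one, pow_one, hfnc (n + 1), hgval (n + 1) (n + 1), if_neg (lt_irrefl _)]
        split <;> ring
      rw [e1] at h1
      refine h1.trans (add_le_add_right (Finset.sum_le_sum fun m _ => ?_) _)
      refine mul_le_mul_of_nonneg_left ?_ (pow_nonneg hR.le m)
      refine coeff_pow_mono' fn f ?_ ?_ m (n + 1)
      · intro k; rw [hfnc k]
        have h3 : 0 ≤ gAux Θ (n + 1) k := (hgdom (n + 1)).2 k
        split <;> linarith
      · intro k; rw [hfnc k, hfc k]
        have h3 : gAux Θ (n + 1) k ≤ fixT Θ k := by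
          rw [hgval (n + 1) k]
          split
          · exact le_rfl
          · exact hTnn k
        linarith
  -- choice of radius
  set r : ℝ := 1 / (2 * R * (1 + 2 * R) ^ 2) with hrdef
  have hr : 0 < r := by rw [hrdef]; positivity
  have hrR : 2 * R * (1 + 2 * R) ^ 2 * r = 1 := by
    rw [hrdef]; field_simp
  have hxhalf : R * (1 + 2 * R) * r ≤ 1 / 2 := by
    nlinarith [mul_pos (mul_pos hR (by positivity : (0:ℝ) < 1 + 2 * R)) hr]
  -- the partial sum bound
  have hbound : ∀ N, ∑ n ∈ range N, fixT Θ n * r ^ n ≤ 2 * R * r := by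
    intro N
    induction N with
    | zero => simp; positivity
    | succ N ih =>
      have step1 : ∑ n ∈ range (N + 1), fixT Θ n * r ^ n ≤
          ∑ n ∈ range (N + 1), ((if n = 1 then R else 0) +
            ∑ m ∈ Finset.Icc 2 n, R ^ m * coeff n (f ^ m)) * r ^ n := by
        refine Finset.sum_le_sum fun n _ => ?_
        exact mul_le_mul_of_nonneg_right (hkey n) (pow_nonneg hr.le n)
      have step2 : ∑ n ∈ range (N + 1), ((if n = 1 then R else 0) +
            ∑ m ∈ Finset.Icc 2 n, R ^ m * coeff n (f ^ m)) * r ^ n =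
          (∑ n ∈ range (N + 1), (if n = 1 then R * r else 0)) +
          ∑ n ∈ range (N + 1), ∑ m ∈ Finset.Icc 2 n, R ^ m * coeff n (f ^ m) * r ^ n := by
        rw [← Finset.sum_add_distrib]
        refine Finset.sum_congr rfl fun n _ => ?_
        rw [add_mul, Finset.sum_mul]
        congr 1
        split
        · rename_i h; rw [h]; ring
        · ring
      have hfirst : (∑ n ∈ range (N + 1), (if n = 1 then R * r else 0)) ≤ R * r := by
        rw [Finset.sum_ite_eq' (range (N + 1)) 1 (fun _ => R * r)]
        split
        · exact le_rfl
        · positivity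
      have hswap : ∑ n ∈ range (N + 1), ∑ m ∈ Finset.Icc 2 n, R ^ m * coeff n (f ^ m) * r ^ n ≤
          ∑ m ∈ Finset.Icc 2 N, R ^ m * ∑ n ∈ range (N + 1), coeff n (f ^ m) * r ^ n := by
        have hnonneg : ∀ m n, 0 ≤ R ^ m * coeff n (f ^ m) * r ^ n := fun m n =>
          mul_nonneg (mul_nonneg (pow_nonneg hR.le m) (coeff_pow_nonneg' f hfnn m n))
            (pow_nonneg hr.le n)
        calc ∑ n ∈ range (N + 1), ∑ m ∈ Finset.Icc 2 n, R ^ m * coeff n (f ^ m) * r ^ n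
            ≤ ∑ n ∈ range (N + 1), ∑ m ∈ Finset.Icc 2 N, R ^ m * coeff n (f ^ m) * r ^ n := by
              refine Finset.sum_le_sum fun n hn => ?_
              refine Finset.sum_le_sum_of_subset_of_nonneg ?_ fun m _ _ => hnonneg m n
              refine Finset.Icc_subset_Icc_right ?_
              simp at hn; omega
          _ = ∑ m ∈ Finset.Icc 2 N, ∑ n ∈ range (N + 1), R ^ m * coeff n (f ^ m) * r ^ n :=
              Finset.sum_comm
          _ = ∑ m ∈ Finset.Icc 2 N, R ^ m * ∑ n ∈ range (N + 1), coeff n (f ^ m) * r ^ n := by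
              refine Finset.sum_congr rfl fun m _ => ?_
              rw [Finset.mul_sum]
              refine Finset.sum_congr rfl fun n _ => by ring
      have hsecond : ∑ m ∈ Finset.Icc 2 N, R ^ m * ∑ n ∈ range (N + 1), coeff n (f ^ m) * r ^ n
          ≤ R * r := by
        by_cases hN2 : 2 ≤ N
        · set P : ℝ := ∑ i ∈ range N, coeff i f * r ^ i with hPdef
          have hPval : P = r + ∑ i ∈ range N, fixT Θ i * r ^ i := by
            rw [hPdef]
            have : ∀ i ∈ range N, coeff i f * r ^ i =
                (if i = 1 then r else 0) + fixT Θ i * r ^ i := by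
              intro i _
              rw [hfc i, add_mul]
              congr 1
              split
              · rename_i h; rw [h]; ring
              · ring
            rw [Finset.sum_congr rfl this, Finset.sum_add_distrib,
              Finset.sum_ite_eq' (range N) 1 (fun _ => r), if_pos (by simp; omega)]
          have hPpos : 0 ≤ P :=
            Finset.sum_nonneg fun i _ => mul_nonneg (hfnn i) (pow_nonneg hr.le i)
          have hPle : P ≤ (1 + 2 * R) * r := by
            rw [hPval]; nlinarith [ih]
          have hterm : ∀ m ∈ Finset.Icc 2 N,
              R ^ m * ∑ n ∈ range (N + 1), coeff n (f ^ m) * r ^ n ≤ (R * P) ^ m := by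
            intro m hm
            simp only [Finset.mem_Icc] at hm
            rw [mul_pow]
            refine mul_le_mul_of_nonneg_left ?_ (pow_nonneg hR.le m)
            exact sum_coeff_pow_le' f hf0 hfnn r hr.le N (by omega) m hm.1
          have hx0 : 0 ≤ R * P := mul_nonneg hR.le hPpos
          have hxle : R * P ≤ 1 / 2 := by
            calc R * P ≤ R * ((1 + 2 * R) * r) :=
                  mul_le_mul_of_nonneg_left hPle hR.le
              _ = R * (1 + 2 * R) * r := by ring
              _ ≤ 1 / 2 := hxhalf
          calc ∑ m ∈ Finset.Icc 2 N, R ^ m * ∑ n ∈ range (N + 1), coeff n (f ^ m) * r ^ n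
              ≤ ∑ m ∈ Finset.Icc 2 N, (R * P) ^ m := Finset.sum_le_sum hterm
            _ ≤ 2 * (R * P) ^ 2 := geom_Icc_le _ hx0 hxle N
            _ ≤ 2 * (R * ((1 + 2 * R) * r)) ^ 2 := by
                refine mul_le_mul_of_nonneg_left ?_ (by norm_num)
                refine pow_le_pow_left₀ hx0 ?_ 2
                exact mul_le_mul_of_nonneg_left hPle hR.le
            _ = R * r * (2 * R * (1 + 2 * R) ^ 2 * r) := by ring
            _ = R * r := by rw [hrR, mul_one]
        · have : Finset.Icc 2 N = ∅ := by
            rw [Finset.Icc_eq_empty_iff]; omega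
          rw [this, Finset.sum_empty]
          positivity
      calc ∑ n ∈ range (N + 1), fixT Θ n * r ^ n
          ≤ (∑ n ∈ range (N + 1), (if n = 1 then R * r else 0)) +
            ∑ n ∈ range (N + 1), ∑ m ∈ Finset.Icc 2 n, R ^ m * coeff n (f ^ m) * r ^ n := by
            rw [← step2]; exact step1
        _ ≤ R * r + R * r := add_le_add hfirst (hswap.trans hsecond)
        _ = 2 * R * r := by ring
  exact ⟨fixT Θ, hT, hfix, huniq, r, hr,
    summable_of_sum_range_le (fun n => mul_nonneg (hTnn n) (pow_nonneg hr.le n)) hbound⟩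
end

section
/- Let E(z,w) = ∑_{ij} e_{ij} z^i w^j have nonnegative coefficients with e_{00} = 0. The associated operator T ↦ E(z,T) on DOM[z] is retro if and only if e_{01} = 0. -/
/-- The elementary operator `T ↦ E(z,T)` at the level of coefficients: since `T`
has zero constant term, only the terms with `j ≤ n` contribute to `[z^n] E(z,T)`. -/
noncomputable def elemOp (e : ℕ → ℕ → ℝ) (t : ℕ → ℝ) (n : ℕ) : ℝ :=
  ∑ j ∈ Finset.range (n + 1),
    PowerSeries.coeff (R := ℝ) n (PowerSeries.mk (fun i => e i j) * PowerSeries.mk t ^ j)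

lemma coeff_pow_congr (f g : PowerSeries ℝ) (k : ℕ)
    (h : ∀ m ≤ k, PowerSeries.coeff (R := ℝ) m f = PowerSeries.coeff (R := ℝ) m g) :
    ∀ j, ∀ m ≤ k, PowerSeries.coeff (R := ℝ) m (f ^ j) = PowerSeries.coeff (R := ℝ) m (g ^ j) := by
  intro j
  induction j with
  | zero => intro m hm; simp
  | succ j ih =>
    intro m hm
    rw [pow_succ, pow_succ, PowerSeries.coeff_mul, PowerSeries.coeff_mul]
    apply Finset.sum_congr rfl
    intro p hp
    rw [Finset.HasAntidiagonal.mem_antidiagonal] at hp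
    have hp1 : p.1 ≤ k := by omega
    have hp2 : p.2 ≤ k := by omega
    rw [ih p.1 hp1, h p.2 hp2]

lemma coeff_pow_congr' (a b : ℕ → ℝ) (ha : a 0 = 0) (hb : b 0 = 0) (n j : ℕ) (hj : 2 ≤ j)
    (h : ∀ m, m < n → a m = b m) :
    PowerSeries.coeff (R := ℝ) n ((PowerSeries.mk a) ^ j) =
      PowerSeries.coeff (R := ℝ) n ((PowerSeries.mk b) ^ j) := by
  obtain ⟨j', rfl⟩ : ∃ j', j = j' + 1 := ⟨j - 1, by omega⟩
  have hj' : 1 ≤ j' := by omega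
  rw [pow_succ, pow_succ, PowerSeries.coeff_mul, PowerSeries.coeff_mul]
  apply Finset.sum_congr rfl
  intro p hp
  rw [Finset.HasAntidiagonal.mem_antidiagonal] at hp
  rcases Nat.eq_zero_or_pos p.2 with h2 | h2
  · -- second factor is constant coeff = 0
    have : (PowerSeries.coeff (R := ℝ) p.2) (PowerSeries.mk a) = 0 := by
      rw [h2]; simpa using ha
    have hbz : (PowerSeries.coeff (R := ℝ) p.2) (PowerSeries.mk b) = 0 := by
      rw [h2]; simpa using hb
    rw [this, hbz, mul_zero, mul_zero]
  · have hp1 : p.1 < n := by omega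
    have hcong : ∀ m ≤ p.1, PowerSeries.coeff (R := ℝ) m (PowerSeries.mk a) =
        PowerSeries.coeff (R := ℝ) m (PowerSeries.mk b) := by
      intro m hm
      simp only [PowerSeries.coeff_mk]
      exact h m (by omega)
    rcases Nat.eq_or_lt_of_le (show p.2 ≤ n by omega) with h2n | h2n
    · -- p.2 = n, p.1 = 0, first factor coeff 0 (f^j') = a0^j' = 0
      have hp0 : p.1 = 0 := by omega
      have ha' : (PowerSeries.coeff (R := ℝ) p.1) (PowerSeries.mk a ^ j') = 0 := by
        rw [hp0]
        simp only [PowerSeries.coeff_zero_eq_constantCoeff, map_pow]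
        simp [ha, zero_pow (by omega : j' ≠ 0)]
      have hb' : (PowerSeries.coeff (R := ℝ) p.1) (PowerSeries.mk b ^ j') = 0 := by
        rw [hp0]
        simp only [PowerSeries.coeff_zero_eq_constantCoeff, map_pow]
        simp [hb, zero_pow (by omega : j' ≠ 0)]
      rw [ha', hb', zero_mul, zero_mul]
    · rw [coeff_pow_congr _ _ p.1 hcong j' p.1 le_rfl]
      simp only [PowerSeries.coeff_mk]
      rw [h p.2 h2n]

/-- the elementary operator associated with `E` is retro iff
`e_{01} = 0`. -/
theorem stmt_18 (e : ℕ → ℕ → ℝ) (hnn : ∀ i j, 0 ≤ e i j) (h00 : e 0 0 = 0) :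
    Retro (elemOp e) ↔ e 0 1 = 0 := by
  constructor
  · intro hR
    set a : ℕ → ℝ := fun m => if m = 0 then 0 else 1 with ha
    set b : ℕ → ℝ := fun _ => 0 with hb
    have hda : DomSeq a := ⟨by simp [ha], fun n => by by_cases h : n = 0 <;> simp [ha, h]⟩
    have hdb : DomSeq b := ⟨rfl, fun n => le_rfl⟩
    have := hR a b hda hdb 1 (by intro m hm hm'; omega)
    -- compute both sides
    have hcalc : elemOp e a 1 = e 1 0 + e 0 1 ∧ elemOp e b 1 = e 1 0 := by
      constructor <;>
      · simp only [elemOp, Finset.sum_range_succ, Finset.sum_range_zero, pow_zero, mul_one,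
          pow_one, PowerSeries.coeff_mul, Finset.Nat.sum_antidiagonal_eq_sum_range_succ_mk,
          Finset.sum_range_succ, Finset.sum_range_zero, PowerSeries.coeff_mk, ha, hb]
        norm_num
    rw [hcalc.1, hcalc.2] at this
    linarith
  · intro h01
    intro a b hda hdb n hab
    have hab' : ∀ m, m < n → a m = b m := by
      intro m hm
      rcases Nat.eq_zero_or_pos m with rfl | hm1
      · rw [hda.1, hdb.1]
      · exact hab m hm1 hm
    unfold elemOp
    apply Finset.sum_congr rfl
    intro j hj
    rw [PowerSeries.coeff_mul, PowerSeries.coeff_mul]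
    apply Finset.sum_congr rfl
    intro p hp
    rw [Finset.HasAntidiagonal.mem_antidiagonal] at hp
    rcases Nat.eq_or_lt_of_le (show p.2 ≤ n by omega) with h2n | h2n
    · -- p.2 = n, p.1 = 0
      have hp0 : p.1 = 0 := by omega
      match j with
      | 0 => simp
      | 1 =>
        have : (PowerSeries.coeff (R := ℝ) p.1) (PowerSeries.mk fun i => e i 1) = 0 := by
          rw [hp0]; simpa using h01
        rw [this, zero_mul, zero_mul]
      | (j + 2) =>
        rw [coeff_pow_congr' a b hda.1 hdb.1 p.2 (j + 2) (by omega) (by rw [h2n]; exact hab')]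
    · have hcong : ∀ m ≤ p.2, PowerSeries.coeff (R := ℝ) m (PowerSeries.mk a) =
          PowerSeries.coeff (R := ℝ) m (PowerSeries.mk b) := by
        intro m hm
        simp only [PowerSeries.coeff_mk]
        exact hab' m (by omega)
      rw [coeff_pow_congr _ _ p.2 hcong j p.2 le_rfl]
end
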